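/- arXiv:1912.09763 — 8 statements merged into one kernel-verified Lean document; each statement's English description precedes it below -/
import Mathlib

section
/- Let G be a finite abelian group that is a direct sum of m cyclic groups. Then the number κ(G) of direct summands in a primary decomposition of G (a decomposition into cyclic groups of prime-power order) is at most Ω_m(|G|). -/
open Finset

/-- The truncated prime `Ω`-function: `Ω_m(z) = ∑_p min(v_p(z), m)`. -/
def truncatedOmega (m z : ℕ) : ℕ := ∑ p ∈ z.primeFactors, min (z.factorization p) m

section Aux

lemma card_pow_eq_one_congr {G H : Type*} [Group G] [Group H] (e : G ≃* H) (p : ℕ) :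
    Nat.card {g : G // g ^ p = 1} = Nat.card {h : H // h ^ p = 1} :=
  Nat.card_congr (Equiv.subtypeEquiv e.toEquiv (fun g => by
    simp [← map_pow, map_eq_one_iff e e.injective]))

lemma card_pow_eq_one_pi {ι : Type*} [Fintype ι] (A : ι → Type*) [∀ i, Group (A i)] (p : ℕ) :
    Nat.card {f : ∀ i, A i // f ^ p = 1} = ∏ i, Nat.card {a : A i // a ^ p = 1} := by
  rw [← Nat.card_pi]
  apply Nat.card_congr
  exact (Equiv.subtypeEquivRight (fun f => by simp [funext_iff])).trans Equiv.subtypePiEquivPi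

lemma prime_le_card_pow_eq_one {α : Type*} [Group α] [Fintype α] {p : ℕ} (hp : p.Prime)
    (hdvd : p ∣ Fintype.card α) : p ≤ Nat.card {x : α // x ^ p = 1} := by
  haveI : Fact p.Prime := ⟨hp⟩
  obtain ⟨g, hg⟩ := exists_prime_orderOf_dvd_card p hdvd
  have : Nat.card (Subgroup.zpowers g) = p := by rw [Nat.card_zpowers, hg]
  have hmem : ∀ x : Subgroup.zpowers g, (x : α) ^ p = 1 := by
    rintro ⟨x, j, rfl⟩
    simp only
    rw [← zpow_natCast, ← zpow_mul, mul_comm j (p : ℤ), zpow_mul, zpow_natCast, ← hg,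
      pow_orderOf_eq_one, one_zpow]
  have hinj : Function.Injective
      (fun x : Subgroup.zpowers g => (⟨x.1, hmem x⟩ : {x : α // x ^ p = 1})) := by
    intro a b hab
    exact Subtype.ext (Subtype.mk_eq_mk.mp hab)
  have hle := Nat.card_le_card_of_injective _ hinj
  rwa [this] at hle

lemma card_pow_eq_one_le {α : Type*} [Group α] [Fintype α] [IsCyclic α] {p : ℕ} (hp : 0 < p) :
    Nat.card {x : α // x ^ p = 1} ≤ p := by
  classical
  rw [Nat.card_eq_fintype_card, Fintype.card_subtype]
  exact IsCyclic.card_pow_eq_one_le hp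

end Aux

/-- If a finite abelian group `G` is a direct sum of `m` cyclic groups, then the number `k` of
summands in any primary decomposition of `G` (into nontrivial cyclic groups of prime-power
order) is at most `Ω_m(|G|)`. -/
theorem kappa_le_truncatedOmega (G : Type*) [CommGroup G] [Fintype G] (m : ℕ)
    (d : Fin m → ℕ) (hG : Nonempty (G ≃* ((i : Fin m) → Multiplicative (ZMod (d i)))))
    (k : ℕ) (q : Fin k → ℕ) (hq : ∀ i, IsPrimePow (q i))
    (hdec : Nonempty (G ≃* ((i : Fin k) → Multiplicative (ZMod (q i))))) :
    k ≤ truncatedOmega m (Fintype.card G) := by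
  classical
  obtain ⟨e⟩ := hG
  obtain ⟨f⟩ := hdec
  haveI : ∀ i, NeZero (q i) := fun i => ⟨(hq i).pos.ne'⟩
  haveI : Fintype ((i : Fin m) → Multiplicative (ZMod (d i))) := Fintype.ofEquiv G e.toEquiv
  haveI hfd : ∀ i, Fintype (Multiplicative (ZMod (d i))) := fun i =>
    Fintype.ofSurjective (α := (j : Fin m) → Multiplicative (ZMod (d j))) (Function.eval i) (Function.surjective_eval i)
  set N := Fintype.card G with hNdef
  have hN : N = ∏ i, q i := by
    rw [hNdef, ← Nat.card_eq_fintype_card, Nat.card_congr f.toEquiv, Nat.card_pi]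
    exact Finset.prod_congr rfl fun i _ => by
      rw [Nat.card_congr Multiplicative.toAdd, Nat.card_zmod]
  have hN0 : N ≠ 0 := Fintype.card_ne_zero
  -- per-prime bound
  have key : ∀ p ∈ N.primeFactors,
      #(univ.filter fun i => p ∣ q i) ≤ min (N.factorization p) m := by
    intro p hp
    have hpp : p.Prime := Nat.prime_of_mem_primeFactors hp
    set r := #(univ.filter fun i => p ∣ q i) with hr
    refine le_min ?_ ?_
    · -- r ≤ v_p N
      have hfac : N.factorization p = ∑ i, (q i).factorization p := by
        rw [hN, Nat.factorization_prod (fun i _ => (hq i).pos.ne')]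
        simp [Finset.sum_apply']
      rw [hfac, hr, Finset.card_eq_sum_ones]
      refine le_trans (Finset.sum_le_sum fun i hi => ?_)
        (Finset.sum_le_sum_of_subset (Finset.filter_subset _ _))
      exact (hpp.factorization_pos_of_dvd (hq i).pos.ne' (Finset.mem_filter.mp hi).2)
    · -- r ≤ m, via counting p-torsion
      have hT : Nat.card {g : G // g ^ p = 1}
          = ∏ i, Nat.card {x : Multiplicative (ZMod (q i)) // x ^ p = 1} :=
        (card_pow_eq_one_congr f p).trans (card_pow_eq_one_pi _ p)
      have hT' : Nat.card {g : G // g ^ p = 1}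
          = ∏ i, Nat.card {x : Multiplicative (ZMod (d i)) // x ^ p = 1} :=
        (card_pow_eq_one_congr e p).trans (card_pow_eq_one_pi _ p)
      have hlow : p ^ r ≤ Nat.card {g : G // g ^ p = 1} := by
        rw [hT, hr, ← Finset.prod_const]
        refine le_trans (Finset.prod_le_prod (fun _ _ => Nat.zero_le _) fun i hi => ?_)
          (Finset.prod_le_prod_of_subset_of_one_le' (Finset.filter_subset _ _)
            (fun i _ _ => by
              haveI : Nonempty {x : Multiplicative (ZMod (q i)) // x ^ p = 1} :=
                ⟨⟨1, one_pow p⟩⟩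
              exact Nat.card_pos))
        have hdvd : p ∣ Fintype.card (Multiplicative (ZMod (q i))) := by
          have : Fintype.card (Multiplicative (ZMod (q i))) = q i := by
            rw [← Nat.card_eq_fintype_card, Nat.card_congr Multiplicative.toAdd, Nat.card_zmod]
          rw [this]; exact (Finset.mem_filter.mp hi).2
        exact prime_le_card_pow_eq_one hpp hdvd
      have hhigh : Nat.card {g : G // g ^ p = 1} ≤ p ^ m := by
        rw [hT']
        calc ∏ i, Nat.card {x : Multiplicative (ZMod (d i)) // x ^ p = 1}
            ≤ ∏ _i : Fin m, p := Finset.prod_le_prod (fun _ _ => Nat.zero_le _)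
              (fun i _ => card_pow_eq_one_le hpp.pos)
          _ = p ^ m := by simp
      exact (Nat.pow_le_pow_iff_right hpp.one_lt).mp (hlow.trans hhigh)
  -- partition the summands by their prime
  have hmem : ∀ i : Fin k, (q i).minFac ∈ N.primeFactors := by
    intro i
    refine Nat.mem_primeFactors.mpr ⟨Nat.minFac_prime (hq i).one_lt.ne', ?_, hN0⟩
    exact (Nat.minFac_dvd _).trans (hN ▸ Finset.dvd_prod_of_mem q (Finset.mem_univ i))
  have hk : #(univ : Finset (Fin k))
      = ∑ p ∈ N.primeFactors, #(univ.filter fun i => (q i).minFac = p) :=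
    Finset.card_eq_sum_card_fiberwise fun i _ => hmem i
  have hku : k = #(univ : Finset (Fin k)) := by simp
  rw [truncatedOmega, hku, hk]
  refine Finset.sum_le_sum fun p hp => le_trans (Finset.card_le_card ?_) (key p hp)
  intro i hi
  simp only [Finset.mem_filter, Finset.mem_univ, true_and] at hi ⊢
  exact hi ▸ Nat.minFac_dvd _
end

section
/- Let G be a finite abelian group. Then the maximum cardinality of a non-redundant generating subset S of G equals κ(G), the number of summands in the primary decomposition of G. (In particular, any non-redundant subset S of G satisfies |S| ≤ κ(G).) -/
open Subgroup Finset

/-- A finite subset `S` of a group is non-redundant if removing any element of `S`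
generates a strictly smaller subgroup. -/
def NonRedundant {G : Type*} [CommGroup G] [DecidableEq G] (S : Finset G) : Prop :=
  ∀ x ∈ S, Subgroup.closure (↑(S.erase x) : Set G) < Subgroup.closure (S : Set G)

section Helpers


open Subgroup Finset

variable {G : Type*} [CommGroup G]

lemma pow_nat_gcd_mem (K : Subgroup G) {x : G} {a b : ℕ}
    (h1 : x ^ a ∈ K) (h2 : x ^ b ∈ K) : x ^ Nat.gcd a b ∈ K := by
  have hb := Int.gcd_eq_gcd_ab (a : ℤ) (b : ℤ)
  have : x ^ ((Nat.gcd a b : ℤ)) ∈ K := by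
    rw [show ((Nat.gcd a b : ℤ)) = (a : ℤ) * Int.gcdA a b + (b : ℤ) * Int.gcdB a b by
      rw [← hb]; norm_cast]
    rw [zpow_add, zpow_mul, zpow_mul]
    exact mul_mem (zpow_mem (by rwa [zpow_natCast]) _) (zpow_mem (by rwa [zpow_natCast]) _)
  rwa [zpow_natCast] at this

lemma pow_finset_gcd_mem (K : Subgroup G) {x : G} (T : Finset ℕ) (f : ℕ → ℕ)
    (h : ∀ t ∈ T, x ^ f t ∈ K) : x ^ T.gcd f ∈ K := by
  classical
  induction T using Finset.induction_on with
  | empty => simpa using K.one_mem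
  | insert _ _ ha ih =>
    rw [Finset.gcd_insert]
    exact pow_nat_gcd_mem K (h _ (Finset.mem_insert_self _ _))
      (ih fun t ht => h t (Finset.mem_insert_of_mem ht))

lemma mem_of_zpow_mem (K : Subgroup G) {x : G} {g : ℤ} {n : ℕ}
    (h1 : x ^ g ∈ K) (h2 : x ^ n = 1) (hcop : Nat.Coprime g.natAbs n) : x ∈ K := by
  have hna : x ^ (g.natAbs) ∈ K := by
    rcases Int.natAbs_eq g with he | he
    · rw [← zpow_natCast, ← he]; exact h1
    · rw [← zpow_natCast]
      have : x ^ (-(g.natAbs : ℤ)) ∈ K := by rw [← he]; exact h1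
      simpa using K.inv_mem this
  have := pow_nat_gcd_mem K hna (h2 ▸ K.one_mem : x ^ n ∈ K)
  rwa [hcop, pow_one] at this

lemma nonredundant_not_mem {G : Type*} [CommGroup G] [DecidableEq G] {S : Finset G}
    (hS : ∀ x ∈ S, Subgroup.closure (↑(S.erase x) : Set G) < Subgroup.closure (S : Set G))
    {x : G} (hx : x ∈ S) : x ∉ Subgroup.closure (↑(S.erase x) : Set G) := by
  intro hmem
  refine absurd (hS x hx) (not_lt_of_ge ?_)
  refine (Subgroup.closure_le _).2 ?_
  intro y hy
  simp only [Finset.mem_coe] at hy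
  rcases eq_or_ne y x with rfl | hne
  · exact hmem
  · exact Subgroup.subset_closure (by simp [Finset.mem_erase, hne, hy] : y ∈ S.erase x)

lemma key_count [Finite G] [DecidableEq G] {p b : ℕ} (hp : p.Prime) (Z : Finset G)
    (hord : ∀ z ∈ Z, z ^ p ^ b = 1)
    (hind : ∀ z ∈ Z, z ∉ Subgroup.closure ((Z.erase z : Finset G) : Set G)) :
    p ^ Z.card ≤ Nat.card {x : G // x ^ p = 1} := by
  classical
  haveI : NeZero p := ⟨hp.ne_zero⟩
  set N : Subgroup G := Subgroup.closure (Z : Set G) with hN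
  set W : Subgroup G := Subgroup.closure ((Z.image (· ^ p) : Finset G) : Set G) with hW
  have hWN : W ≤ N := by
    rw [hW, Subgroup.closure_le]
    intro w hw
    simp only [Finset.coe_image, Set.mem_image, Finset.mem_coe] at hw
    obtain ⟨z, hz, rfl⟩ := hw
    exact pow_mem (Subgroup.subset_closure (by exact hz)) p
  set F : ((↥Z → ZMod p)) → G := fun c => ∏ z ∈ Z.attach, z.1 ^ (c z).val with hF
  have hFN : ∀ c, F c ∈ N := by
    intro c
    exact Subgroup.prod_mem _ fun z _ => pow_mem (Subgroup.subset_closure z.2) _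
  -- main injectivity
  have hinj : ∀ c c' : (↥Z → ZMod p), F c / F c' ∈ W → c = c' := by
    intro c c' hmem
    by_contra hne
    obtain ⟨z₀, hz₀⟩ := Function.ne_iff.1 hne
    set D : ↥Z → ℤ := fun z => ((c z).val : ℤ) - ((c' z).val : ℤ) with hD
    have hdiv : F c / F c' = ∏ z ∈ Z.attach, z.1 ^ D z := by
      rw [hF]
      rw [← Finset.prod_div_distrib]
      refine Finset.prod_congr rfl fun z _ => ?_
      rw [hD, zpow_sub, zpow_natCast, zpow_natCast, div_eq_mul_inv]
    set C : Subgroup G := Subgroup.closure ((Z.erase z₀.1 : Finset G) : Set G) with hC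
    have hsplit : F c / F c' = z₀.1 ^ D z₀ * ∏ z ∈ Z.attach.erase z₀, z.1 ^ D z := by
      rw [hdiv, ← Finset.mul_prod_erase _ _ (Finset.mem_attach _ z₀)]
    have hR : (∏ z ∈ Z.attach.erase z₀, z.1 ^ D z) ∈ C := by
      refine Subgroup.prod_mem _ fun z hz => ?_
      refine zpow_mem (Subgroup.subset_closure ?_) _
      obtain ⟨hz1, _⟩ := Finset.mem_erase.1 hz
      exact Finset.mem_coe.2 (Finset.mem_erase.2 ⟨fun h => hz1 (Subtype.ext h), z.2⟩)
    have hzd : z₀.1 ^ D z₀ ∈ C ⊔ Subgroup.zpowers (z₀.1 ^ p) := by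
      have h1 : z₀.1 ^ D z₀ = (F c / F c') * (∏ z ∈ Z.attach.erase z₀, z.1 ^ D z)⁻¹ := by
        rw [hsplit]; group
      have hWle : W ≤ C ⊔ Subgroup.zpowers (z₀.1 ^ p) := by
        rw [hW, Subgroup.closure_le]
        intro w hw
        simp only [Finset.coe_image, Set.mem_image, Finset.mem_coe] at hw
        obtain ⟨z, hz, rfl⟩ := hw
        rcases eq_or_ne z z₀.1 with rfl | hzne
        · exact SetLike.le_def.1 le_sup_right (Subgroup.mem_zpowers _)
        · refine SetLike.le_def.1 le_sup_left ?_
          exact pow_mem (Subgroup.subset_closure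
            (Finset.mem_coe.2 (Finset.mem_erase.2 ⟨hzne, hz⟩))) _
      rw [h1]
      exact mul_mem (hWle hmem) (SetLike.le_def.1 le_sup_left (inv_mem hR))
    obtain ⟨u, hu, v, hv, huv⟩ := Subgroup.mem_sup.1 hzd
    obtain ⟨m, hm⟩ := Subgroup.mem_zpowers_iff.1 hv
    have hg : z₀.1 ^ (D z₀ - (p : ℤ) * m) ∈ C := by
      have : z₀.1 ^ (D z₀ - (p : ℤ) * m) = z₀.1 ^ D z₀ * ((z₀.1 ^ p) ^ m)⁻¹ := by
        rw [zpow_sub, ← zpow_natCast z₀.1 p, ← zpow_mul]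
      rw [this, hm, ← huv]
      group
      exact hu
    -- p does not divide the exponent
    have hpnd : ¬ ((p : ℤ) ∣ (D z₀ - (p : ℤ) * m)) := by
      intro hdvd
      have : ((D z₀ - (p : ℤ) * m : ℤ) : ZMod p) = 0 :=
        (ZMod.intCast_zmod_eq_zero_iff_dvd _ _).2 hdvd
      rw [hD] at this
      push_cast at this
      rw [ZMod.natCast_zmod_val, ZMod.natCast_zmod_val, ZMod.natCast_self] at this
      apply hz₀
      have h0 : c z₀ - c' z₀ = 0 := by linear_combination this
      exact sub_eq_zero.1 h0
    have hcop : Nat.Coprime (D z₀ - (p : ℤ) * m).natAbs (p ^ b) := by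
      refine Nat.Coprime.pow_right _ ?_
      refine (Nat.coprime_comm.1 (hp.coprime_iff_not_dvd.2 ?_))
      intro hdvd
      exact hpnd ((Int.natCast_dvd_natCast.2 hdvd).trans (Int.natAbs_dvd.2 dvd_rfl))
    exact hind z₀.1 z₀.2 (mem_of_zpow_mem C hg (hord z₀.1 z₀.2) hcop)
  -- counting part
  have hpow : ∀ n ∈ N, n ^ p ∈ W := by
    intro n hn
    induction hn using Subgroup.closure_induction with
    | mem x hx =>
      exact Subgroup.subset_closure
        (Finset.mem_coe.2 (Finset.mem_image_of_mem _ (Finset.mem_coe.1 hx)))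
    | one => simpa using W.one_mem
    | mul x y hx hy ihx ihy => rw [mul_pow]; exact mul_mem ihx ihy
    | inv x hx ihx => rw [inv_pow]; exact inv_mem ihx
  set ψ : N →* G := (powMonoidHom p).comp N.subtype with hψ
  have hψval : ∀ n : N, ψ n = (n : G) ^ p := fun n => rfl
  have hrange : ψ.range = W := by
    apply le_antisymm
    · rintro _ ⟨n, rfl⟩
      rw [hψval]
      exact hpow _ n.2
    · rw [hW, Subgroup.closure_le]
      intro w hw
      simp only [Finset.coe_image, Set.mem_image, Finset.mem_coe] at hw
      obtain ⟨z, hz, rfl⟩ := hw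
      exact ⟨⟨z, Subgroup.subset_closure hz⟩, rfl⟩
  have h1 : Nat.card ((↥Z → ZMod p) × ↥W) ≤ Nat.card ↥N := by
    apply Nat.card_le_card_of_injective
      (fun cw => (⟨F cw.1 * cw.2.1, mul_mem (hFN _) (hWN cw.2.2)⟩ : ↥N))
    rintro ⟨c, w⟩ ⟨c', w'⟩ h
    simp only [Subtype.mk.injEq] at h
    have hcc' : c = c' := by
      refine hinj c c' ?_
      have hd : F c / F c' = w'.1 * w.1⁻¹ := by
        have h2 : F c = F c' * (w'.1 * w.1⁻¹) := by rw [← mul_assoc, ← h]; group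
        rw [h2, mul_div_cancel_left]
      rw [hd]
      exact mul_mem w'.2 (inv_mem w.2)
    subst hcc'
    have : w.1 = w'.1 := mul_left_cancel h
    exact Prod.ext rfl (Subtype.ext this)
  have hcardfun : Nat.card ((↥Z → ZMod p) × ↥W) = p ^ Z.card * Nat.card ↥W := by
    rw [Nat.card_prod, Nat.card_fun, Nat.card_zmod, Nat.card_eq_finsetCard]
  have hker : Nat.card ψ.ker ≤ Nat.card {x : G // x ^ p = 1} := by
    apply Nat.card_le_card_of_injective
      (fun n => (⟨(n.1 : G), by
        have hn := n.2
        rw [MonoidHom.mem_ker, hψval] at hn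
        exact hn⟩ : {x : G // x ^ p = 1}))
    intro a b hab
    simp only [Subtype.mk.injEq] at hab
    exact Subtype.ext (Subtype.ext hab)
  have hlag : Nat.card ↥N = Nat.card ↥W * Nat.card ψ.ker := by
    rw [Subgroup.card_eq_card_quotient_mul_card_subgroup ψ.ker]
    congr 1
    rw [Nat.card_congr (QuotientGroup.quotientKerEquivRange ψ).toEquiv, hrange]
  have hWpos : 0 < Nat.card ↥W := Nat.card_pos
  have : p ^ Z.card * Nat.card ↥W ≤ Nat.card ↥W * Nat.card ψ.ker := by
    rw [← hcardfun, ← hlag]; exact h1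
  rw [mul_comm (p ^ Z.card)] at this
  exact le_trans (Nat.le_of_mul_le_mul_left this hWpos) hker


open Finset

lemma mult_pow_eq_one_iff {m n : ℕ} (t : Multiplicative (ZMod m)) :
    t ^ n = 1 ↔ (n : ZMod m) * t.toAdd = 0 := by
  rw [← nsmul_eq_mul]
  constructor
  · intro h
    have := congrArg Multiplicative.toAdd h
    simpa using this
  · intro h
    apply Multiplicative.toAdd.injective
    simpa using h

lemma zmod_sol_count {p l e : ℕ} (hp : p.Prime) (hl : l.Prime) (he : 0 < e) :
    Nat.card {t : Multiplicative (ZMod (l ^ e)) // t ^ p = 1} ≤ if l = p then p else 1 := by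
  haveI : NeZero (l ^ e) := NeZero.of_pos (pow_pos hl.pos e)
  rcases eq_or_ne l p with heq | hne
  · subst heq
    rw [if_pos rfl]
    have hee : l ^ e = l * l ^ (e - 1) := by rw [← pow_succ']; congr 1; omega
    have hlt : ∀ x : {t : Multiplicative (ZMod (l ^ e)) // t ^ l = 1},
        (Multiplicative.toAdd x.1).val / l ^ (e - 1) < l := by
      intro x
      rw [Nat.div_lt_iff_lt_mul (pow_pos hl.pos _)]
      calc (Multiplicative.toAdd x.1).val < l ^ e := ZMod.val_lt _
        _ = l * l ^ (e - 1) := hee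
    have hdvd : ∀ x : {t : Multiplicative (ZMod (l ^ e)) // t ^ l = 1},
        l ^ (e - 1) ∣ (Multiplicative.toAdd x.1).val := by
      intro x
      have h0 : (l : ZMod (l ^ e)) * (Multiplicative.toAdd x.1) = 0 :=
        (mult_pow_eq_one_iff _).1 x.2
      have h1 : ((l * (Multiplicative.toAdd x.1).val : ℕ) : ZMod (l ^ e)) = 0 := by
        push_cast [ZMod.natCast_zmod_val]
        exact h0
      have h2 : l ^ e ∣ l * (Multiplicative.toAdd x.1).val :=
        (ZMod.natCast_eq_zero_iff _ _).1 h1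
      obtain ⟨c, hc⟩ := h2
      refine ⟨c, ?_⟩
      generalize hgen : (Multiplicative.toAdd x.1).val = v at hc ⊢
      rw [hee, mul_assoc] at hc
      exact Nat.eq_of_mul_eq_mul_left hl.pos hc
    have hinj : Function.Injective
        (fun x : {t : Multiplicative (ZMod (l ^ e)) // t ^ l = 1} =>
          (⟨(Multiplicative.toAdd x.1).val / l ^ (e - 1), hlt x⟩ : Fin l)) := by
      intro a b hab
      simp only [Fin.mk.injEq] at hab
      have ha := Nat.div_mul_cancel (hdvd a)
      have hb := Nat.div_mul_cancel (hdvd b)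
      have hval : (Multiplicative.toAdd a.1).val = (Multiplicative.toAdd b.1).val := by
        rw [← ha, ← hb, hab]
      exact Subtype.ext (Multiplicative.toAdd.injective (ZMod.val_injective _ hval))
    calc Nat.card {t : Multiplicative (ZMod (l ^ e)) // t ^ l = 1}
        ≤ Nat.card (Fin l) := Nat.card_le_card_of_injective _ hinj
      _ = l := by simp
  · rw [if_neg hne]
    have hall : ∀ x : {t : Multiplicative (ZMod (l ^ e)) // t ^ p = 1},
        x = ⟨1, one_pow p⟩ := by
      intro x
      have h0 : (p : ZMod (l ^ e)) * (Multiplicative.toAdd x.1) = 0 :=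
        (mult_pow_eq_one_iff _).1 x.2
      have hu : IsUnit (p : ZMod (l ^ e)) := by
        rw [ZMod.isUnit_iff_coprime]
        exact ((Nat.coprime_primes hp hl).2 (Ne.symm hne)).pow_right e
      have : (Multiplicative.toAdd x.1) = 0 := (hu.mul_right_eq_zero).1 h0
      exact Subtype.ext (Multiplicative.toAdd.injective (by simpa using this))
    calc Nat.card {t : Multiplicative (ZMod (l ^ e)) // t ^ p = 1}
        ≤ Nat.card Unit := Nat.card_le_card_of_injective (fun _ => ())
          (fun a b _ => (hall a).trans (hall b).symm)
      _ = 1 := Nat.card_unique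

lemma pi_pow_eq_one_iff {k : ℕ} {q : Fin k → ℕ} (x : (i : Fin k) → Multiplicative (ZMod (q i)))
    (n : ℕ) : x ^ n = 1 ↔ ∀ i, (x i) ^ n = 1 := by
  rw [funext_iff]
  simp [Pi.pow_apply]

lemma pi_pow_prod_eq_one {k : ℕ} {q : Fin k → ℕ}
    (x : (i : Fin k) → Multiplicative (ZMod (q i))) : x ^ (∏ i, q i) = 1 := by
  rw [pi_pow_eq_one_iff]
  intro i
  rw [mult_pow_eq_one_iff]
  have : ((∏ j, q j : ℕ) : ZMod (q i)) = 0 :=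
    (ZMod.natCast_eq_zero_iff _ _).2 (Finset.dvd_prod_of_mem _ (Finset.mem_univ i))
  rw [this, zero_mul]

lemma pi_card_sol_le {k : ℕ} {q : Fin k → ℕ} (r b : Fin k → ℕ) (hr : ∀ i, (r i).Prime)
    (hb : ∀ i, 0 < b i) (hrb : ∀ i, (r i) ^ (b i) = q i) {p : ℕ} (hp : p.Prime) :
    Nat.card {x : (i : Fin k) → Multiplicative (ZMod (q i)) // x ^ p = 1}
      ≤ p ^ (Finset.univ.filter (fun i => r i = p)).card := by
  classical
  have E1 : {x : (i : Fin k) → Multiplicative (ZMod (q i)) // x ^ p = 1}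
      ≃ ((i : Fin k) → {t : Multiplicative (ZMod (q i)) // t ^ p = 1}) :=
    (Equiv.subtypeEquivRight (fun x => pi_pow_eq_one_iff x p)).trans
      (Equiv.subtypePiEquivPi (p := fun i (t : Multiplicative (ZMod (q i))) => t ^ p = 1))
  rw [Nat.card_congr E1, Nat.card_pi]
  calc (∏ i, Nat.card {t : Multiplicative (ZMod (q i)) // t ^ p = 1})
      ≤ ∏ i, (if r i = p then p else 1) := by
        refine Finset.prod_le_prod' fun i _ => ?_
        rw [← hrb i]
        exact zmod_sol_count hp (hr i) (hb i)
    _ = p ^ (Finset.univ.filter (fun i => r i = p)).card := by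
        rw [Finset.prod_ite, Finset.prod_const, Finset.prod_const_one, mul_one]

lemma exists_nonredundant (G : Type*) [CommGroup G] [DecidableEq G]
    (k : ℕ) (q : Fin k → ℕ) (hq : ∀ i, IsPrimePow (q i))
    (E : G ≃* ((i : Fin k) → Multiplicative (ZMod (q i)))) :
    ∃ S : Finset G, NonRedundant S ∧ S.card = k := by
  classical
  haveI : ∀ i, Fact (1 < q i) := fun i => ⟨(hq i).two_le⟩
  set g : (i : Fin k) → ((j : Fin k) → Multiplicative (ZMod (q j))) :=
    fun i => Pi.mulSingle i (Multiplicative.ofAdd (1 : ZMod (q i))) with hg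
  have hone : ∀ i, Multiplicative.ofAdd (1 : ZMod (q i)) ≠ 1 := by
    intro i h
    have := Multiplicative.ofAdd.injective (h.trans (rfl : (1 : Multiplicative (ZMod (q i))) = Multiplicative.ofAdd 0))
    exact one_ne_zero this
  have hginj : Function.Injective g := by
    intro i j hij
    by_contra hne
    have := congrFun hij i
    rw [hg] at this
    simp only [Pi.mulSingle_eq_same, Pi.mulSingle_eq_of_ne hne] at this
    exact hone i this
  set f : Fin k → G := fun i => E.symm (g i) with hf
  have hfinj : Function.Injective f := fun i j h => hginj (E.symm.injective h)
  refine ⟨Finset.univ.image f, ?_, by rw [Finset.card_image_of_injective _ hfinj, Finset.card_univ, Fintype.card_fin]⟩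
  intro x hx
  obtain ⟨i, -, rfl⟩ := Finset.mem_image.1 hx
  have herase : (Finset.univ.image f).erase (f i) = (Finset.univ.erase i).image f :=
    (Finset.image_erase hfinj _ _).symm
  have hnotmem : f i ∉ Subgroup.closure (↑((Finset.univ.image f).erase (f i)) : Set G) := by
    rw [herase]
    intro hmem
    have h2 : E (f i) ∈ (Subgroup.closure (↑((Finset.univ.erase i).image f) : Set G)).map
        E.toMonoidHom := Subgroup.mem_map_of_mem _ hmem
    rw [MonoidHom.map_closure] at h2
    have h3 : (E.toMonoidHom '' ↑((Finset.univ.erase i).image f)) ⊆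
        ↑((Pi.evalMonoidHom (fun j => Multiplicative (ZMod (q j))) i).ker) := by
      rintro - ⟨y, hy, rfl⟩
      obtain ⟨j, hj, rfl⟩ := Finset.mem_image.1 (Finset.mem_coe.1 hy)
      have hji : j ≠ i := (Finset.mem_erase.1 hj).1
      have : E.toMonoidHom (f j) = g j := by
        simp [hf]
      rw [this]
      simp only [SetLike.mem_coe, MonoidHom.mem_ker, Pi.evalMonoidHom_apply, hg]
      exact Pi.mulSingle_eq_of_ne (Ne.symm hji) _
    have h4 := (Subgroup.closure_le _).2 h3 h2
    have h5 : E (f i) = g i := by simp [hf]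
    rw [h5] at h4
    simp only [MonoidHom.mem_ker, Pi.evalMonoidHom_apply, hg, Pi.mulSingle_eq_same] at h4
    exact hone i h4
  have hmem' : f i ∈ Subgroup.closure (↑(Finset.univ.image f) : Set G) :=
    Subgroup.subset_closure (Finset.mem_coe.2 hx)
  refine lt_of_le_of_ne (Subgroup.closure_mono (by exact_mod_cast Finset.erase_subset _ _)) ?_
  intro heq
  rw [heq] at hnotmem
  exact hnotmem hmem'

end Helpers

/-- The maximum cardinality of a non-redundant subset of a finite abelian group `G` equals
`κ(G)`, the number of summands in a primary decomposition of `G` (here given as a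
decomposition into `k` nontrivial cyclic groups of prime-power order). -/
theorem max_card_nonredundant_eq_kappa (G : Type*) [CommGroup G] [Fintype G] [DecidableEq G]
    (k : ℕ) (q : Fin k → ℕ) (hq : ∀ i, IsPrimePow (q i))
    (hdec : Nonempty (G ≃* ((i : Fin k) → Multiplicative (ZMod (q i))))) :
    IsGreatest {n : ℕ | ∃ S : Finset G, NonRedundant S ∧ S.card = n} k := by
  classical
  obtain ⟨E⟩ := hdec
  haveI : ∀ i, NeZero (q i) := fun i => NeZero.of_pos (lt_of_lt_of_le two_pos (hq i).two_le)
  constructor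
  · obtain ⟨S, hS, hcard⟩ := exists_nonredundant G k q hq E
    exact ⟨S, hS, hcard⟩
  · rintro n ⟨S, hS, rfl⟩
    have hrb : ∀ i, ∃ p, ∃ m, p.Prime ∧ 0 < m ∧ p ^ m = q i := by
      intro i
      obtain ⟨p, m, hp, hm, h⟩ := hq i
      exact ⟨p, m, hp.nat_prime, hm, h⟩
    choose r b hr hbpos hrbq using hrb
    set full := ∏ i, q i with hfull
    have hfull1 : ∀ x : G, x ^ full = 1 := by
      intro x
      apply E.injective
      rw [map_pow, map_one]
      exact pi_pow_prod_eq_one (E x)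
    set e : ℕ → ℕ := fun p => ∏ i ∈ Finset.univ.filter (fun i => r i ≠ p), q i with he
    set T : Finset ℕ := Finset.univ.image r with hT
    have hprime_eq : ∀ (ℓ : ℕ), ℓ.Prime → ∀ j, ℓ ∣ q j → ℓ = r j := by
      intro ℓ hℓ j hdvd
      have h1 : ℓ ∣ (r j) ^ (b j) := by rw [hrbq j]; exact hdvd
      exact (Nat.prime_dvd_prime_iff_eq hℓ (hr j)).1 (hℓ.dvd_of_dvd_pow h1)
    have hassign : ∀ x ∈ S, ∃ p ∈ T, x ^ (e p) ∉ Subgroup.closure (↑(S.erase x) : Set G) := by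
      intro x hx
      by_contra hcon
      push_neg at hcon
      have hxK : x ∉ Subgroup.closure (↑(S.erase x) : Set G) := nonredundant_not_mem hS hx
      rcases T.eq_empty_or_nonempty with hTe | hTne
      · have hke : IsEmpty (Fin k) := by
          rw [hT, Finset.image_eq_empty, Finset.univ_eq_empty_iff] at hTe
          exact hTe
        have hsub : Subsingleton ((i : Fin k) → Multiplicative (ZMod (q i))) :=
          ⟨fun a b => funext fun i => (hke.false i).elim⟩
        have hx1 : x = 1 := E.injective (hsub.elim (E x) (E 1))
        rw [hx1] at hxK
        exact hxK (Subgroup.one_mem _)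
      · have hgcd1 : T.gcd e = 1 := by
          by_contra hne1
          obtain ⟨ℓ, hℓp, hℓd⟩ := Nat.exists_prime_and_dvd hne1
          have hmemT : ∀ p' ∈ T, ℓ ∈ T := by
            intro p' hp'
            have h1 : ℓ ∣ e p' := hℓd.trans (Finset.gcd_dvd hp')
            rw [he] at h1
            obtain ⟨j, hj, hdq⟩ := (hℓp.prime.dvd_finset_prod_iff _).1 h1
            rw [hT, hprime_eq ℓ hℓp j hdq]
            exact Finset.mem_image_of_mem r (Finset.mem_univ j)
          obtain ⟨p₀, hp₀⟩ := hTne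
          have hℓT : ℓ ∈ T := hmemT p₀ hp₀
          have h2 : ℓ ∣ e ℓ := hℓd.trans (Finset.gcd_dvd hℓT)
          rw [he] at h2
          obtain ⟨j, hj, hdq⟩ := (hℓp.prime.dvd_finset_prod_iff _).1 h2
          exact (Finset.mem_filter.1 hj).2 (hprime_eq ℓ hℓp j hdq).symm
        have hgmem : x ^ (T.gcd e) ∈ Subgroup.closure (↑(S.erase x) : Set G) :=
          pow_finset_gcd_mem _ T e hcon
        rw [hgcd1, pow_one] at hgmem
        exact hxK hgmem
    choose! pfun hpT hpnot using hassign
    have hScard : S.card = ∑ p ∈ T, (S.filter (fun x => pfun x = p)).card :=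
      Finset.card_eq_sum_card_fiberwise hpT
    have hkcard : k = ∑ p ∈ T, (Finset.univ.filter (fun i => r i = p)).card := by
      have h := Finset.card_eq_sum_card_fiberwise
        (fun i (_ : i ∈ (Finset.univ : Finset (Fin k))) =>
          (by rw [hT]; exact Finset.mem_image_of_mem r (Finset.mem_univ i) : r i ∈ T))
      rwa [Finset.card_univ, Fintype.card_fin] at h
    rw [hScard, hkcard]
    refine Finset.sum_le_sum fun p hpT' => ?_
    obtain ⟨i₀, -, hi₀⟩ := Finset.mem_image.1 (by rw [hT] at hpT'; exact hpT')
    have hp : p.Prime := hi₀ ▸ hr i₀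
    set Sp := S.filter (fun x => pfun x = p) with hSp
    set Z : Finset G := Sp.image (fun x => x ^ (e p)) with hZ
    have hxdata : ∀ x ∈ Sp, x ∈ S ∧ x ^ (e p) ∉ Subgroup.closure (↑(S.erase x) : Set G) := by
      intro x hx
      obtain ⟨hxS, hxp⟩ := Finset.mem_filter.1 hx
      refine ⟨hxS, ?_⟩
      have h := hpnot x hxS
      rwa [hxp] at h
    have hinjOn : Set.InjOn (fun x => x ^ (e p)) (↑Sp : Set G) := by
      intro a ha b hb hab
      by_contra hne
      obtain ⟨haS, hanot⟩ := hxdata a (Finset.mem_coe.1 ha)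
      obtain ⟨hbS, -⟩ := hxdata b (Finset.mem_coe.1 hb)
      have hbe : b ∈ S.erase a := Finset.mem_erase.2 ⟨fun h => hne h.symm, hbS⟩
      have hmem : b ^ (e p) ∈ Subgroup.closure (↑(S.erase a) : Set G) :=
        pow_mem (Subgroup.subset_closure (Finset.mem_coe.2 hbe)) _
      simp only at hab
      rw [← hab] at hmem
      exact hanot hmem
    have hZcard : Z.card = Sp.card := Finset.card_image_of_injOn hinjOn
    set B := ∑ i ∈ Finset.univ.filter (fun i => r i = p), b i with hB
    have hepB : e p * p ^ B = full := by
      have h1 : (∏ i ∈ Finset.univ.filter (fun i => r i = p), q i) = p ^ B := by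
        rw [hB, ← Finset.prod_pow_eq_pow_sum]
        refine Finset.prod_congr rfl fun i hi => ?_
        rw [← hrbq i, (Finset.mem_filter.1 hi).2]
      rw [he, ← h1, mul_comm, hfull]
      exact Finset.prod_filter_mul_prod_filter_not Finset.univ _ _
    have hord : ∀ z ∈ Z, z ^ p ^ B = 1 := by
      intro z hz
      obtain ⟨x, hx, rfl⟩ := Finset.mem_image.1 hz
      rw [← pow_mul, hepB]
      exact hfull1 x
    have hind : ∀ z ∈ Z, z ∉ Subgroup.closure ((Z.erase z : Finset G) : Set G) := by
      intro z hz hmem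
      obtain ⟨x, hx, rfl⟩ := Finset.mem_image.1 hz
      obtain ⟨hxS, hxnot⟩ := hxdata x hx
      have hsub : (↑(Z.erase (x ^ e p)) : Set G) ⊆
          ↑(Subgroup.closure (↑(S.erase x) : Set G)) := by
        intro w hw
        obtain ⟨hwne, hwZ⟩ := Finset.mem_erase.1 (Finset.mem_coe.1 hw)
        obtain ⟨y, hy, rfl⟩ := Finset.mem_image.1 hwZ
        have hyS : y ∈ S := (Finset.mem_filter.1 hy).1
        have hyx : y ≠ x := fun h => hwne (by rw [h])
        exact pow_mem (Subgroup.subset_closure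
          (Finset.mem_coe.2 (Finset.mem_erase.2 ⟨hyx, hyS⟩))) _
      exact hxnot ((Subgroup.closure_le _).2 hsub hmem)
    have hcount := key_count hp Z hord hind
    have hGP : Nat.card {x : G // x ^ p = 1} ≤ p ^ (Finset.univ.filter (fun i => r i = p)).card := by
      refine le_trans (Nat.card_le_card_of_injective
        (fun x => (⟨E x.1, by rw [← map_pow, x.2, map_one]⟩ :
          {y : (i : Fin k) → Multiplicative (ZMod (q i)) // y ^ p = 1})) ?_)
        (pi_card_sol_le r b hr hbpos hrbq hp)
      intro a b hab
      exact Subtype.ext (E.injective (congrArg Subtype.val hab))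
    have hfinal : Z.card ≤ (Finset.univ.filter (fun i => r i = p)).card :=
      (Nat.pow_le_pow_iff_right hp.one_lt).1 (le_trans hcount hGP)
    rw [← hZcard]
    exact hfinal
end

section
/- Let A ∈ ℤ^{m×n} be a matrix whose columns positively span ℝ^m (i.e., every vector of ℝ^m is a non-negative real combination of the columns). Then the semigroup Sg(A) = {Ax : x ∈ ℤ^n_{≥0}} equals the lattice ℒ(A) = {Ax : x ∈ ℤ^n}. -/
/-- Auxiliary: there is an integer vector with all coordinates `≥ 1` in the kernel of `A`,
assuming the columns positively span. -/
theorem exists_pos_kernel_vec {m n : ℕ} (A : Matrix (Fin m) (Fin n) ℤ)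
    (hspan : ∀ v : Fin m → ℝ, ∃ c : Fin n → ℝ, (∀ j, 0 ≤ c j) ∧
      (∀ i, v i = ∑ j, c j * (A i j : ℝ))) :
    ∃ y : Fin n → ℤ, (∀ j, 1 ≤ y j) ∧ A.mulVec y = 0 := by
  obtain ⟨c, hc0, hc⟩ := hspan (fun i => -∑ j, (A i j : ℝ))
  set d : Fin n → ℝ := fun j => c j + 1 with hd
  have hd1 : ∀ j, (1 : ℝ) ≤ d j := fun j => by
    have := hc0 j; simp only [hd]; linarith
  have hdsum : ∀ i, ∑ j, d j * (A i j : ℝ) = 0 := by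
    intro i
    have h := hc i
    simp only [hd, add_mul, one_mul, Finset.sum_add_distrib]
    linarith
  set xN : ℕ → Fin n → ℤ := fun N j => ⌊(N : ℝ) * d j⌋ with hxN
  -- key bound: images are uniformly bounded
  have key : ∀ N : ℕ, ∀ i, |(A.mulVec (xN N)) i| ≤ ∑ j, |A i j| := by
    intro N i
    have hreal : ((A.mulVec (xN N)) i : ℝ)
        = ∑ j, (A i j : ℝ) * ((⌊(N : ℝ) * d j⌋ : ℝ) - (N : ℝ) * d j) := by
      have hzero : ∑ j, (A i j : ℝ) * ((N : ℝ) * d j) = 0 := by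
        have : ∑ j, (A i j : ℝ) * ((N : ℝ) * d j)
            = (N : ℝ) * ∑ j, d j * (A i j : ℝ) := by
          rw [Finset.mul_sum]; apply Finset.sum_congr rfl; intros; ring
        rw [this, hdsum i, mul_zero]
      simp only [Matrix.mulVec, dotProduct, hxN]
      push_cast
      simp only [mul_sub, Finset.sum_sub_distrib, hzero, sub_zero]
    have habs : |((A.mulVec (xN N)) i : ℝ)| ≤ ∑ j, |(A i j : ℝ)| := by
      rw [hreal]
      calc |∑ j, (A i j : ℝ) * ((⌊(N : ℝ) * d j⌋ : ℝ) - (N : ℝ) * d j)|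
          ≤ ∑ j, |(A i j : ℝ) * ((⌊(N : ℝ) * d j⌋ : ℝ) - (N : ℝ) * d j)| :=
            Finset.abs_sum_le_sum_abs _ _
        _ ≤ ∑ j, |(A i j : ℝ)| := by
            apply Finset.sum_le_sum
            intro j _
            rw [abs_mul]
            have h1 : |(⌊(N : ℝ) * d j⌋ : ℝ) - (N : ℝ) * d j| ≤ 1 := by
              rw [abs_le]
              constructor
              · have := Int.sub_one_lt_floor ((N : ℝ) * d j); linarith
              · have := Int.floor_le ((N : ℝ) * d j); linarith
            calc |(A i j : ℝ)| * |(⌊(N : ℝ) * d j⌋ : ℝ) - (N : ℝ) * d j|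
                ≤ |(A i j : ℝ)| * 1 :=
                  mul_le_mul_of_nonneg_left h1 (abs_nonneg _)
              _ = |(A i j : ℝ)| := mul_one _
    have : ((|(A.mulVec (xN N)) i| : ℤ) : ℝ) ≤ ((∑ j, |A i j| : ℤ) : ℝ) := by
      push_cast
      exact habs
    exact_mod_cast this
  -- pigeonhole
  have hfin : (Set.univ.pi fun i : Fin m =>
      ((Finset.Icc (-(∑ j, |A i j|)) (∑ j, |A i j|) : Finset ℤ) : Set ℤ)).Finite :=
    Set.Finite.pi fun i => (Finset.Icc _ _).finite_toSet
  have hmaps : Set.MapsTo (fun N => A.mulVec (xN N)) Set.univ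
      (Set.univ.pi fun i : Fin m =>
        ((Finset.Icc (-(∑ j, |A i j|)) (∑ j, |A i j|) : Finset ℤ) : Set ℤ)) := by
    intro N _
    rw [Set.mem_pi]
    intro i _
    simp only [Finset.coe_Icc, Set.mem_Icc]
    have := key N i
    rw [abs_le] at this
    exact this
  obtain ⟨N, -, M, -, hne, heq⟩ :=
    Set.infinite_univ.exists_ne_map_eq_of_mapsTo hmaps hfin
  -- from two equal images, build the kernel vector
  have build : ∀ N M : ℕ, N < M → A.mulVec (xN N) = A.mulVec (xN M) →
      ∃ y : Fin n → ℤ, (∀ j, 1 ≤ y j) ∧ A.mulVec y = 0 := by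
    intro N M hlt heq
    refine ⟨fun j => xN M j - xN N j, ?_, ?_⟩
    · intro j
      simp only [hxN]
      have h1 : (⌊(N : ℝ) * d j⌋ : ℝ) + 1 ≤ (M : ℝ) * d j := by
        have hfl : (⌊(N : ℝ) * d j⌋ : ℝ) ≤ (N : ℝ) * d j := Int.floor_le _
        have hNM : (N : ℝ) + 1 ≤ (M : ℝ) := by exact_mod_cast hlt
        have hd0 : (0 : ℝ) ≤ (N : ℝ) := Nat.cast_nonneg N
        nlinarith [hd1 j]
      have : ⌊(N : ℝ) * d j⌋ + 1 ≤ ⌊(M : ℝ) * d j⌋ := by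
        rw [Int.le_floor]; push_cast; exact h1
      omega
    · have : (fun j => xN M j - xN N j) = xN M - xN N := rfl
      rw [this, Matrix.mulVec_sub, heq, sub_self]
  rcases hne.lt_or_gt with hlt | hlt
  · exact build N M hlt heq
  · exact build M N hlt heq.symm

/-- If the columns of the integer matrix `A` positively span `ℝ^m`, then the semigroup of
non-negative integer combinations of the columns equals the lattice of all integer
combinations of the columns. -/
theorem semigroup_eq_lattice_of_positively_spanning {m n : ℕ}
    (A : Matrix (Fin m) (Fin n) ℤ)
    (hspan : ∀ v : Fin m → ℝ, ∃ c : Fin n → ℝ, (∀ j, 0 ≤ c j) ∧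
      (∀ i, v i = ∑ j, c j * (A i j : ℝ))) :
    {b : Fin m → ℤ | ∃ x : Fin n → ℤ, (∀ j, 0 ≤ x j) ∧ A.mulVec x = b} =
      {b : Fin m → ℤ | ∃ x : Fin n → ℤ, A.mulVec x = b} := by
  obtain ⟨y, hy1, hy2⟩ := exists_pos_kernel_vec A hspan
  ext b
  simp only [Set.mem_setOf_eq]
  constructor
  · rintro ⟨x, _, h⟩; exact ⟨x, h⟩
  · rintro ⟨x, hx⟩
    set K : ℤ := ∑ j, |x j| with hK
    have hK0 : 0 ≤ K := Finset.sum_nonneg fun j _ => abs_nonneg _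
    have hKj : ∀ j, |x j| ≤ K :=
      fun j => Finset.single_le_sum (fun j _ => abs_nonneg (x j)) (Finset.mem_univ j)
    refine ⟨fun j => x j + K * y j, ?_, ?_⟩
    · intro j
      have h1 : K * 1 ≤ K * y j := mul_le_mul_of_nonneg_left (hy1 j) hK0
      have h2 : -|x j| ≤ x j := neg_abs_le _
      have h3 := hKj j
      show 0 ≤ x j + K * y j
      linarith
    · funext i
      have h0 : ∑ j, A i j * y j = 0 := by
        have := congrFun hy2 i
        simpa [Matrix.mulVec, dotProduct] using this
      have hxi : ∑ j, A i j * x j = b i := by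
        have := congrFun hx i
        simpa [Matrix.mulVec, dotProduct] using this
      show ∑ j, A i j * (x j + K * y j) = b i
      have : ∑ j, A i j * (x j + K * y j)
          = (∑ j, A i j * x j) + K * ∑ j, A i j * y j := by
        rw [Finset.mul_sum, ← Finset.sum_add_distrib]
        apply Finset.sum_congr rfl; intros; ring
      rw [this, h0, hxi, mul_zero, add_zero]
end

section
/- Let a = (a₁,…,a_n) ∈ (ℤ \ {0})^n be a vector containing both positive and negative components, and b ∈ ℤ. If the equation a·x = b has a solution x ∈ ℤ^n_{≥0}, then it has such a solution with ‖x‖₀ ≤ 2 + min_{i ∈ [n]} ω(|a_i| / gcd(a)), where ω denotes the number of distinct prime factors. -/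
/-- Bézout over a finite set. -/
lemma bezout_finset {ι : Type*} [DecidableEq ι] (f : ι → ℤ) (s : Finset ι) :
    ∃ y : ι → ℤ, ∑ j ∈ s, f j * y j = ((s.gcd fun j => (f j).natAbs : ℕ) : ℤ) := by
  classical
  induction s using Finset.induction with
  | empty => exact ⟨0, by simp⟩
  | @insert i s hi ih =>
    obtain ⟨y, hy⟩ := ih
    set G : ℕ := s.gcd fun j => (f j).natAbs with hG
    refine ⟨fun j => if j = i then Int.gcdA (f i) (G : ℤ) else Int.gcdB (f i) (G : ℤ) * y j, ?_⟩
    rw [Finset.sum_insert hi]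
    beta_reduce
    have h1 : ∑ j ∈ s, f j * (if j = i then Int.gcdA (f i) (G : ℤ)
        else Int.gcdB (f i) (G : ℤ) * y j) = Int.gcdB (f i) (G : ℤ) * ∑ j ∈ s, f j * y j := by
      rw [Finset.mul_sum]
      refine Finset.sum_congr rfl fun j hj => ?_
      have : j ≠ i := fun h => hi (h ▸ hj)
      rw [if_neg this]; ring
    rw [h1, hy, if_pos rfl, Finset.gcd_insert]
    have h2 : gcd ((f i).natAbs) G = Int.gcd (f i) (G : ℤ) := by
      rw [Int.gcd]
      simp only [Int.natAbs_natCast]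
      rfl
    rw [h2, Int.gcd_eq_gcd_ab]
    ring

/-- Fix an integer solution supported on `T` into a nonnegative one using one extra index. -/
lemma fix_lemma {n : ℕ} (a : Fin n → ℤ) (b : ℤ) (T : Finset (Fin n)) (z : Fin n → ℤ)
    (hz0 : ∀ j ∉ T, z j = 0) (hsum : ∑ i, a i * z i = b)
    (s m : Fin n) (hs : s ∈ T) (has : 0 < a s) (ham : a m < 0) :
    ∃ x : Fin n → ℤ, (∀ i, 0 ≤ x i) ∧ ∑ i, a i * x i = b ∧
      ∀ j, x j ≠ 0 → j ∈ insert m T := by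
  classical
  set t0 : Fin n → ℤ := fun j => max 0 (-(z j)) with ht0
  set S0 : ℤ := ∑ j, a j * t0 j with hS0
  set E : ℤ := max 0 (-S0) with hE
  set t : Fin n → ℤ := fun j => t0 j + (if j = s then E else 0) with ht
  set S : ℤ := S0 + a s * E with hS
  have hE0 : 0 ≤ E := le_max_left _ _
  have hSnn : 0 ≤ S := by
    have h1 : -S0 ≤ E := le_max_right _ _
    have h2 : E ≤ a s * E := le_mul_of_one_le_left hE0 (by linarith)
    simp only [hS]; linarith
  have ht0nn : ∀ j, 0 ≤ t0 j := fun j => le_max_left _ _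
  have htnn : ∀ j, 0 ≤ t j := fun j => by
    have := ht0nn j
    simp only [ht]
    split <;> linarith
  refine ⟨fun j => z j + (-(a m)) * t j + (if j = m then S else 0), ?_, ?_, ?_⟩
  · intro j
    have h1 : t0 j ≤ t j := by simp only [ht]; split <;> linarith
    have h2 : -(z j) ≤ t0 j := le_max_right _ _
    have h3 : t j ≤ (-(a m)) * t j := le_mul_of_one_le_left (htnn j) (by linarith)
    have h4 : (0:ℤ) ≤ if j = m then S else 0 := by split <;> [exact hSnn; exact le_refl 0]
    dsimp only
    linarith
  · have key : ∑ i, a i * (z i + (-(a m)) * t i + (if i = m then S else 0)) =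
        (∑ i, a i * z i) + (-(a m)) * (∑ i, a i * t i) + ∑ i, a i * (if i = m then S else 0) := by
      rw [Finset.mul_sum, ← Finset.sum_add_distrib, ← Finset.sum_add_distrib]
      refine Finset.sum_congr rfl fun i _ => by ring
    rw [key, hsum]
    have hm : ∑ i, a i * (if i = m then S else 0) = a m * S := by
      rw [Finset.sum_eq_single m]
      · simp
      · intro i _ hne; rw [if_neg hne, mul_zero]
      · intro h; exact absurd (Finset.mem_univ m) h
    have htsum : ∑ i, a i * t i = S := by
      have : ∀ i, a i * t i = a i * t0 i + a i * (if i = s then E else 0) := fun i => by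
        simp only [ht]; ring
      rw [Finset.sum_congr rfl fun i _ => this i, Finset.sum_add_distrib]
      have : ∑ i, a i * (if i = s then E else 0) = a s * E := by
        rw [Finset.sum_eq_single s]
        · simp
        · intro i _ hne; rw [if_neg hne, mul_zero]
        · intro h; exact absurd (Finset.mem_univ s) h
      rw [this]
    rw [hm, htsum]
    ring
  · intro j hj
    by_contra hmem
    rw [Finset.mem_insert] at hmem
    push_neg at hmem
    obtain ⟨hjm, hjT⟩ := hmem
    have hz : z j = 0 := hz0 j hjT
    have hjs : j ≠ s := fun h => hjT (h ▸ hs)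
    have : t j = 0 := by simp [ht, ht0, hjs, hz]
    apply hj
    simp [this, hz, hjm]


/-- Mixed-sign knapsack: if `a ∈ (ℤ \ {0})^n` has both positive and negative components and
`a · x = b` has a non-negative integer solution, then it has one with
`‖x‖₀ ≤ 2 + min_i ω(|a_i| / gcd a)`, where `ω` counts distinct prime factors. -/
theorem sparse_solution_mixed_sign_knapsack {n : ℕ} (a : Fin n → ℤ) (b : ℤ)
    (ha : ∀ i, a i ≠ 0) (hpos : ∃ i, 0 < a i) (hneg : ∃ i, a i < 0)
    (hfeas : ∃ x : Fin n → ℤ, (∀ i, 0 ≤ x i) ∧ ∑ i, a i * x i = b) :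
    ∃ x : Fin n → ℤ, (∀ i, 0 ≤ x i) ∧ ∑ i, a i * x i = b ∧
      ∀ i : Fin n,
        (Finset.univ.filter fun j => x j ≠ 0).card ≤
          2 + ((a i).natAbs / Finset.univ.gcd fun j => (a j).natAbs).primeFactors.card := by
  classical
  obtain ⟨x0, hx0pos, hx0sum⟩ := hfeas
  obtain ⟨k, hk⟩ := hpos
  obtain ⟨m, hm⟩ := hneg
  set d : ℕ := Finset.univ.gcd fun j => (a j).natAbs with hd
  have hdvdn : ∀ i : Fin n, d ∣ (a i).natAbs := fun i => Finset.gcd_dvd (Finset.mem_univ i)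
  have hdvd : ∀ i : Fin n, (d : ℤ) ∣ a i := fun i =>
    Int.dvd_natAbs.mp (Int.natCast_dvd_natCast.mpr (hdvdn i))
  have hd0 : d ≠ 0 := by
    intro h
    have := Finset.gcd_eq_zero_iff.mp (hd ▸ h) k (Finset.mem_univ k)
    exact ha k (Int.natAbs_eq_zero.mp this)
  have hdb : (d : ℤ) ∣ b := by
    rw [← hx0sum]
    exact Finset.dvd_sum fun i _ => Dvd.dvd.mul_right (hdvd i) _
  -- choose the minimizing index
  obtain ⟨i₀, -, hi₀min⟩ := Finset.exists_min_image Finset.univ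
    (fun i => ((a i).natAbs / d).primeFactors.card) ⟨k, Finset.mem_univ k⟩
  set g : ℕ := (a i₀).natAbs / d with hg
  have hdg : d * g = (a i₀).natAbs := Nat.mul_div_cancel' (hdvdn i₀)
  have hgne : g ≠ 0 := by
    intro h
    rw [h, mul_zero] at hdg
    exact ha i₀ (Int.natAbs_eq_zero.mp hdg.symm)
  -- choose witnesses killing each prime of g
  have hexists : ∀ p : ℕ, ∃ j : Fin n, p ∈ g.primeFactors → ¬ (p * d ∣ (a j).natAbs) := by
    intro p
    by_cases hp : p ∈ g.primeFactors
    · by_contra hcon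
      push_neg at hcon
      have hall : ∀ j : Fin n, p * d ∣ (a j).natAbs := fun j => (hcon j).2
      have : p * d ∣ d := Finset.dvd_gcd fun j _ => hall j
      have hle : p * d ≤ d := Nat.le_of_dvd (Nat.pos_of_ne_zero hd0) this
      have hp2 : 2 ≤ p := (Nat.prime_of_mem_primeFactors hp).two_le
      have : 2 * d ≤ p * d := Nat.mul_le_mul_right d hp2
      omega
    · exact ⟨k, fun h => absurd h hp⟩
  choose jp hjp using hexists
  set T : Finset (Fin n) := insert i₀ (g.primeFactors.image jp) with hT
  have hcardT : T.card ≤ 1 + g.primeFactors.card := by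
    calc T.card ≤ (g.primeFactors.image jp).card + 1 := Finset.card_insert_le _ _
    _ ≤ g.primeFactors.card + 1 := by
        exact Nat.add_le_add_right (Finset.card_image_le) 1
    _ = 1 + g.primeFactors.card := by omega
  -- gcd over T equals d
  set DT : ℕ := T.gcd fun j => (a j).natAbs with hDT
  have hdDT : d ∣ DT := Finset.dvd_gcd fun j _ => hdvdn j
  have hDTi₀ : DT ∣ (a i₀).natAbs := Finset.gcd_dvd (Finset.mem_insert_self _ _)
  obtain ⟨e, he⟩ := hdDT
  have hedvd : e ∣ g := by
    rw [← hdg, he] at hDTi₀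
    exact (Nat.mul_dvd_mul_iff_left (Nat.pos_of_ne_zero hd0)).mp hDTi₀
  have he1 : e = 1 := by
    by_contra hne
    obtain ⟨p, hp, hpe⟩ := Nat.exists_prime_and_dvd hne
    have hpg : p ∈ g.primeFactors :=
      Nat.mem_primeFactors.mpr ⟨hp, hpe.trans hedvd, hgne⟩
    have hjT : jp p ∈ T := Finset.mem_insert_of_mem (Finset.mem_image_of_mem jp hpg)
    have h1 : DT ∣ (a (jp p)).natAbs := Finset.gcd_dvd hjT
    have h2 : p * d ∣ DT := by
      rw [he, mul_comm p d]
      exact Nat.mul_dvd_mul_left d hpe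
    exact hjp p hpg (h2.trans h1)
  have hDTd : DT = d := by rw [he, he1, mul_one]
  -- Bézout solution on T scaled by b / d
  obtain ⟨y, hy⟩ := bezout_finset a T
  obtain ⟨c, hc⟩ := hdb
  set z : Fin n → ℤ := fun j => if j ∈ T then y j * c else 0 with hz
  have hz0 : ∀ j ∉ T, z j = 0 := fun j hj => by simp [hz, hj]
  have hzsum : ∑ i, a i * z i = b := by
    have h1 : ∑ i, a i * z i = ∑ i ∈ T, a i * z i := by
      refine (Finset.sum_subset (Finset.subset_univ T) fun i _ hi => ?_).symm
      rw [hz0 i hi, mul_zero]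
    rw [h1]
    have h2 : ∑ i ∈ T, a i * z i = ∑ i ∈ T, a i * y i * c := by
      refine Finset.sum_congr rfl fun i hi => ?_
      simp [hz, hi, mul_assoc]
    rw [h2, ← Finset.sum_mul, hy, ← hDT, hDTd, ← hc]
  -- main case split
  have main : ∃ x : Fin n → ℤ, (∀ i, 0 ≤ x i) ∧ ∑ i, a i * x i = b ∧
      ((∀ j, x j ≠ 0 → j ∈ insert m T) ∨ (∀ j, x j ≠ 0 → j ∈ insert k T)) := by
    by_cases hTpos : ∃ s ∈ T, 0 < a s
    · obtain ⟨s, hsT, hspos⟩ := hTpos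
      obtain ⟨x, h1, h2, h3⟩ := fix_lemma a b T z hz0 hzsum s m hsT hspos hm
      exact ⟨x, h1, h2, Or.inl h3⟩
    · push_neg at hTpos
      have hi₀neg : a i₀ < 0 :=
        lt_of_le_of_ne (hTpos i₀ (Finset.mem_insert_self _ _)) (ha i₀)
      have hsum' : ∑ i, (-(a i)) * z i = -b := by
        rw [← hzsum, ← Finset.sum_neg_distrib]
        exact Finset.sum_congr rfl fun i _ => by ring
      obtain ⟨x, h1, h2, h3⟩ := fix_lemma (fun i => -(a i)) (-b) T z hz0 hsum'
        i₀ k (Finset.mem_insert_self _ _) (by simpa using hi₀neg) (by simpa using hk)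
      refine ⟨x, h1, ?_, Or.inr h3⟩
      have : ∑ i, a i * x i = -∑ i, (-(a i)) * x i := by
        rw [← Finset.sum_neg_distrib]
        exact Finset.sum_congr rfl fun i _ => by ring
      rw [this, h2, neg_neg]
  obtain ⟨x, hxpos, hxsum, hxsupp⟩ := main
  refine ⟨x, hxpos, hxsum, fun i => ?_⟩
  have hcard : ∀ w : Fin n, (∀ j, x j ≠ 0 → j ∈ insert w T) →
      (Finset.univ.filter fun j => x j ≠ 0).card ≤ 2 + g.primeFactors.card := by
    intro w hw
    have hsub : (Finset.univ.filter fun j => x j ≠ 0) ⊆ insert w T := by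
      intro j hj
      rw [Finset.mem_filter] at hj
      exact hw j hj.2
    calc (Finset.univ.filter fun j => x j ≠ 0).card ≤ (insert w T).card :=
          Finset.card_le_card hsub
      _ ≤ T.card + 1 := Finset.card_insert_le _ _
      _ ≤ (1 + g.primeFactors.card) + 1 := Nat.add_le_add_right hcardT 1
      _ = 2 + g.primeFactors.card := by omega
  have hbound : (Finset.univ.filter fun j => x j ≠ 0).card ≤ 2 + g.primeFactors.card := by
    rcases hxsupp with h | h
    · exact hcard m h
    · exact hcard k h
  exact hbound.trans (Nat.add_le_add_left (hi₀min i (Finset.mem_univ i)) 2)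
end

section
/- Let a₁,…,a_t ∈ ℤ_{>0} with t > 1 + log₂(a₁). Then there exists a non-zero integer vector (y₁,…,y_t) with y₁ ≥ 0 and y₂,…,y_t ∈ {-1,0,1} satisfying y₁a₁ + y₂a₂ + ⋯ + y_t a_t = 0. -/
/-- If `a₁, …, a_t` are positive integers with `t > 1 + log₂ a₁`, then there is a non-zero
integer vector `y` with `y₁ ≥ 0`, `y_i ∈ {-1,0,1}` for `i ≥ 2`, and `∑ y_i a_i = 0`. -/
theorem exists_small_integer_relation {t : ℕ} (ht : 0 < t) (a : Fin t → ℤ)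
    (ha : ∀ i, 0 < a i)
    (htlog : (1 : ℝ) + Real.logb 2 (a ⟨0, ht⟩) < t) :
    ∃ y : Fin t → ℤ, y ≠ 0 ∧ 0 ≤ y ⟨0, ht⟩ ∧
      (∀ i : Fin t, i ≠ ⟨0, ht⟩ → y i ∈ ({-1, 0, 1} : Set ℤ)) ∧
      ∑ i, y i * a i = 0 := by
  classical
  set z : Fin t := ⟨0, ht⟩ with hz
  have haz : 0 < a z := ha z
  set n : ℕ := (a z).toNat with hn
  have hnz : (n : ℤ) = a z := Int.toNat_of_nonneg haz.le
  have hnpos : 0 < n := by omega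
  haveI : NeZero n := ⟨hnpos.ne'⟩
  -- a z < 2 ^ (t - 1)
  have hcard : n < 2 ^ (t - 1) := by
    have h2 : Real.logb 2 (a z) < ((t - 1 : ℕ) : ℝ) := by
      have : ((t - 1 : ℕ) : ℝ) = (t : ℝ) - 1 := by
        have : (1:ℕ) ≤ t := ht
        push_cast [Nat.cast_sub this]
        ring
      rw [this]; linarith
    have h1 : (a z : ℝ) < 2 ^ (t - 1 : ℕ) := by
      calc (a z : ℝ) = (2 : ℝ) ^ Real.logb 2 (a z) :=
            (Real.rpow_logb (by norm_num) (by norm_num) (by exact_mod_cast haz)).symm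
        _ < (2 : ℝ) ^ (((t - 1 : ℕ)) : ℝ) :=
            (Real.rpow_lt_rpow_left_iff one_lt_two).mpr h2
        _ = (2 : ℝ) ^ (t - 1 : ℕ) := Real.rpow_natCast 2 (t - 1)
    have : ((n : ℤ) : ℝ) < ((2 ^ (t - 1) : ℕ) : ℝ) := by
      rw [hnz]; push_cast; exact h1
    exact_mod_cast this
  -- pigeonhole on subsets of univ.erase z
  have hDcard : (Finset.univ : Finset (ZMod n)).card <
      ((Finset.univ.erase z).powerset : Finset (Finset (Fin t))).card := by
    simpa [Finset.card_powerset, Finset.card_erase_of_mem, ZMod.card] using hcard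
  obtain ⟨S, hS, T, hT, hSTne, heq⟩ :=
    Finset.exists_ne_map_eq_of_card_lt_of_maps_to hDcard
      (f := fun S => ((∑ i ∈ S, a i : ℤ) : ZMod n)) (fun S _ => Finset.mem_univ _)
  rw [Finset.mem_powerset] at hS hT
  -- WLOG ∑ S ≤ ∑ T
  have key : ∀ S T : Finset (Fin t), S ⊆ Finset.univ.erase z → T ⊆ Finset.univ.erase z →
      S ≠ T → ((∑ i ∈ S, a i : ℤ) : ZMod n) = ((∑ i ∈ T, a i : ℤ) : ZMod n) →
      (∑ i ∈ S, a i) ≤ ∑ i ∈ T, a i →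
      ∃ y : Fin t → ℤ, y ≠ 0 ∧ 0 ≤ y z ∧
        (∀ i : Fin t, i ≠ z → y i ∈ ({-1, 0, 1} : Set ℤ)) ∧
        ∑ i, y i * a i = 0 := by
    intro S T hS hT hSTne heq hle
    have hdvd : (n : ℤ) ∣ (∑ i ∈ T, a i) - (∑ i ∈ S, a i) :=
      ((ZMod.intCast_eq_intCast_iff _ _ _).mp heq).dvd
    obtain ⟨m, hm⟩ := hdvd
    have hm0 : 0 ≤ m := by
      by_contra h
      push_neg at h
      nlinarith [hnz, haz]
    refine ⟨fun i => if i = z then m else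
      (if i ∈ S then 1 else 0) - (if i ∈ T then 1 else 0), ?_, ?_, ?_, ?_⟩
    · intro hy0
      apply hSTne
      have hyz : ∀ i : Fin t, (if i = z then m else
          (if i ∈ S then (1:ℤ) else 0) - (if i ∈ T then 1 else 0)) = 0 := by
        intro i; exact congrFun hy0 i
      ext i
      by_cases hi : i = z
      · subst hi
        constructor
        · intro h; exact absurd (hS h) (by simp)
        · intro h; exact absurd (hT h) (by simp)
      · have := hyz i
        rw [if_neg hi] at this
        by_cases h1 : i ∈ S <;> by_cases h2 : i ∈ T <;> simp_all
    · simpa using hm0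
    · intro i hi
      dsimp only
      rw [if_neg hi]
      by_cases h1 : i ∈ S <;> by_cases h2 : i ∈ T <;> simp [h1, h2]
    · have hzmem : z ∈ (Finset.univ : Finset (Fin t)) := Finset.mem_univ z
      rw [← Finset.add_sum_erase _ _ hzmem]
      have hrw : ∑ i ∈ Finset.univ.erase z,
          (if i = z then m else (if i ∈ S then (1:ℤ) else 0) - (if i ∈ T then 1 else 0)) * a i
          = (∑ i ∈ S, a i) - (∑ i ∈ T, a i) := by
        have h1 : ∀ i ∈ Finset.univ.erase z,
            (if i = z then m else (if i ∈ S then (1:ℤ) else 0) - (if i ∈ T then 1 else 0)) * a i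
            = (if i ∈ S then a i else 0) - (if i ∈ T then a i else 0) := by
          intro i hi
          rw [if_neg (Finset.ne_of_mem_erase hi)]
          by_cases h1 : i ∈ S <;> by_cases h2 : i ∈ T <;> simp [h1, h2]
        rw [Finset.sum_congr rfl h1, Finset.sum_sub_distrib,
          Finset.sum_ite_mem, Finset.sum_ite_mem,
          Finset.inter_eq_right.mpr hS, Finset.inter_eq_right.mpr hT]
      dsimp only
      rw [hrw, if_pos rfl]
      nlinarith [hm, hnz]
  rcases le_total (∑ i ∈ S, a i) (∑ i ∈ T, a i) with h | h
  · exact key S T hS hT hSTne heq h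
  · exact key T S hT hS hSTne.symm heq.symm h
end

section
/- Let a = (a₁,…,a_n) ∈ ℤ^n_{>0} and b ∈ ℤ_{≥0}. If the knapsack equation a·x = b has a solution x ∈ ℤ^n_{≥0}, then it has such a solution with ‖x‖₀ ≤ 1 + ⌊log₂(min{a₁,…,a_n} / gcd(a))⌋. -/
/-- Positive knapsack: if `a ∈ ℤ^n_{>0}`, `b ≥ 0`, and `a · x = b` has a non-negative
integer solution, then it has one with `‖x‖₀ ≤ 1 + ⌊log₂(min_i a_i / gcd a)⌋`. -/
theorem sparse_solution_positive_knapsack {n : ℕ} (hn : 0 < n)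
    (a : Fin n → ℤ) (ha : ∀ i, 0 < a i) (b : ℤ) (hb : 0 ≤ b)
    (hfeas : ∃ x : Fin n → ℤ, (∀ i, 0 ≤ x i) ∧ ∑ i, a i * x i = b) :
    ∃ x : Fin n → ℤ, (∀ i, 0 ≤ x i) ∧ ∑ i, a i * x i = b ∧
      (Finset.univ.filter fun j => x j ≠ 0).card ≤
        1 + Nat.log 2
          ((Finset.univ.inf' ⟨⟨0, hn⟩, Finset.mem_univ _⟩ fun i => (a i).natAbs) /
            Finset.univ.gcd fun i => (a i).natAbs) := by
  classical
  set A : ℕ := Finset.univ.inf' ⟨⟨0, hn⟩, Finset.mem_univ _⟩ fun i => (a i).natAbs with hAdef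
  set g : ℕ := Finset.univ.gcd fun i => (a i).natAbs with hgdef
  obtain ⟨m, -, hm⟩ := Finset.exists_mem_eq_inf'
    (⟨⟨0, hn⟩, Finset.mem_univ _⟩ : (Finset.univ : Finset (Fin n)).Nonempty)
    (fun i => (a i).natAbs)
  have hmA : A = (a m).natAbs := hm
  have haA : 0 < A := by rw [hmA]; exact Int.natAbs_pos.mpr (ha m).ne'
  have hgd : ∀ i, g ∣ (a i).natAbs := fun i => Finset.gcd_dvd (Finset.mem_univ i)
  have hgz : ∀ i, (g : ℤ) ∣ a i := fun i =>
    Int.dvd_natAbs.mp (Int.natCast_dvd_natCast.mpr (hgd i))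
  have hgA : g ∣ A := hmA ▸ hgd m
  have hgpos : 0 < g := by
    rcases Nat.eq_zero_or_pos g with h | h
    · exact absurd (zero_dvd_iff.mp (h ▸ hgd m)) (Int.natAbs_pos.mpr (ha m).ne').ne'
    · exact h
  -- take a solution minimizing the support size away from m
  have hex : ∃ k, ∃ x : Fin n → ℤ, ((∀ i, 0 ≤ x i) ∧ ∑ i, a i * x i = b) ∧
      ((Finset.univ.filter fun j => x j ≠ 0).erase m).card = k := by
    obtain ⟨x, hx⟩ := hfeas; exact ⟨_, x, hx, rfl⟩
  set k0 := Nat.find hex with hk0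
  obtain ⟨x, hxsol, hxcard⟩ := Nat.find_spec hex
  have hmin : ∀ y : Fin n → ℤ, ((∀ i, 0 ≤ y i) ∧ ∑ i, a i * y i = b) →
      k0 ≤ ((Finset.univ.filter fun j => y j ≠ 0).erase m).card :=
    fun y hy => Nat.find_le ⟨y, hy, rfl⟩
  set S : Finset (Fin n) := (Finset.univ.filter fun j => x j ≠ 0).erase m with hSdef
  have hSmem : ∀ i ∈ S, x i ≠ 0 ∧ i ≠ m := by
    intro i hi
    have h1 := Finset.mem_erase.mp hi
    exact ⟨(Finset.mem_filter.mp h1.2).2, h1.1⟩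
  -- the exchange step
  have step : ∀ U₁ U₂ : Finset (Fin n), U₁ ⊆ S → U₂ ⊆ S → Disjoint U₁ U₂ →
      U₁.Nonempty → (∑ i ∈ U₂, a i) ≤ (∑ i ∈ U₁, a i) →
      a m ∣ (∑ i ∈ U₁, a i) - (∑ i ∈ U₂, a i) → False := by
    intro U₁ U₂ hU₁ hU₂ hdisj hne hle hdvd
    obtain ⟨istar, histar, hinf⟩ := Finset.exists_mem_eq_inf' hne x
    set lam := U₁.inf' hne x with hlamdef
    have hlam_le : ∀ i ∈ U₁, lam ≤ x i := fun i hi => Finset.inf'_le x hi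
    have hlam_pos : 0 < lam := by
      rw [hinf]
      exact lt_of_le_of_ne (hxsol.1 istar) (Ne.symm (hSmem istar (hU₁ histar)).1)
    set k : ℤ := ((∑ i ∈ U₁, a i) - (∑ i ∈ U₂, a i)) / a m with hkdef
    have hk : a m * k = (∑ i ∈ U₁, a i) - (∑ i ∈ U₂, a i) := Int.mul_ediv_cancel' hdvd
    have hknn : 0 ≤ k := Int.ediv_nonneg (sub_nonneg.mpr hle) (ha m).le
    set y : Fin n → ℤ := fun j => x j + (if j ∈ U₂ then lam else 0)
      + (if j = m then lam * k else 0) - (if j ∈ U₁ then lam else 0) with hydef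
    have hyU₁ : ∀ j ∈ U₁, y j = x j - lam := by
      intro j hj
      have hjm : j ≠ m := (hSmem j (hU₁ hj)).2
      have hjU₂ : j ∉ U₂ := fun h => (Finset.disjoint_left.mp hdisj hj) h
      simp [hydef, hj, hjm, hjU₂]
    have hynn : ∀ j, 0 ≤ y j := by
      intro j
      by_cases hj : j ∈ U₁
      · rw [hyU₁ j hj]; exact sub_nonneg.mpr (hlam_le j hj)
      · simp only [hydef, hj, if_false, sub_zero]
        have h1 : (0:ℤ) ≤ if j ∈ U₂ then lam else 0 := by positivity
        have h2 : (0:ℤ) ≤ if j = m then lam * k else 0 := by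
          split <;> [exact mul_nonneg hlam_pos.le hknn; exact le_refl 0]
        have := hxsol.1 j
        linarith
    have hysum : ∑ i, a i * y i = b := by
      have expand : ∀ j, a j * y j = a j * x j + (if j ∈ U₂ then a j * lam else 0)
          + (if j = m then a j * (lam * k) else 0) - (if j ∈ U₁ then a j * lam else 0) := by
        intro j
        simp only [hydef, mul_add, mul_sub, mul_ite, mul_zero]
      calc ∑ i, a i * y i
          = ∑ i, a i * x i + (∑ i ∈ U₂, a i * lam) + a m * (lam * k)
              - ∑ i ∈ U₁, a i * lam := by
            simp only [expand]
            rw [Finset.sum_sub_distrib, Finset.sum_add_distrib, Finset.sum_add_distrib,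
              Finset.sum_ite_eq' Finset.univ m, Finset.sum_ite_mem, Finset.sum_ite_mem,
              Finset.univ_inter, Finset.univ_inter]
            simp
        _ = b := by
            have hk' : a m * (lam * k) = lam * ((∑ i ∈ U₁, a i) - (∑ i ∈ U₂, a i)) := by
              rw [mul_left_comm, hk]
            rw [hxsol.2, ← Finset.sum_mul, ← Finset.sum_mul, hk']
            ring
    have hsub : (Finset.univ.filter fun j => y j ≠ 0).erase m ⊆ S.erase istar := by
      intro j hj
      obtain ⟨hjm, hjf⟩ := Finset.mem_erase.mp hj
      have hjy : y j ≠ 0 := (Finset.mem_filter.mp hjf).2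
      have hjS : j ∈ S := by
        by_cases h1 : j ∈ U₁
        · exact hU₁ h1
        by_cases h2 : j ∈ U₂
        · exact hU₂ h2
        · have hxy : y j = x j := by simp [hydef, h1, h2, hjm]
          rw [hxy] at hjy
          exact Finset.mem_erase.mpr ⟨hjm, Finset.mem_filter.mpr ⟨Finset.mem_univ _, hjy⟩⟩
      refine Finset.mem_erase.mpr ⟨?_, hjS⟩
      rintro rfl
      exact hjy (by rw [hyU₁ j histar, hinf, sub_self])
    have hlt : ((Finset.univ.filter fun j => y j ≠ 0).erase m).card < k0 := by
      calc ((Finset.univ.filter fun j => y j ≠ 0).erase m).card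
          ≤ (S.erase istar).card := Finset.card_le_card hsub
        _ < S.card := Finset.card_erase_lt_of_mem (hU₁ histar)
        _ = k0 := hxcard
    exact absurd (hmin y ⟨hynn, hysum⟩) (not_le.mpr hlt)
  -- pigeonhole : 2 ^ k0 ≤ A / g
  have hpow : 2 ^ k0 ≤ A / g := by
    by_contra hcon
    push_neg at hcon
    have hmaps : ∀ T ∈ S.powerset,
        (((∑ i ∈ T, a i) % a m).toNat / g) ∈ Finset.range (A / g) := by
      intro T _
      rw [Finset.mem_range]
      have h0 : 0 ≤ (∑ i ∈ T, a i) % a m := Int.emod_nonneg _ (ha m).ne'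
      have h1 : (∑ i ∈ T, a i) % a m < a m := Int.emod_lt_of_pos _ (ha m)
      have h2 : (g : ℤ) ∣ (∑ i ∈ T, a i) % a m := by
        rw [Int.emod_def]
        exact dvd_sub (Finset.dvd_sum fun i _ => hgz i) (Dvd.dvd.mul_right (hgz m) _)
      have h3 : g ∣ ((∑ i ∈ T, a i) % a m).toNat :=
        Int.natCast_dvd_natCast.mp (by rwa [Int.toNat_of_nonneg h0])
      have h4 : ((∑ i ∈ T, a i) % a m).toNat < A := by
        rw [hmA]; omega
      exact Nat.div_lt_div_of_lt_of_dvd hgA h4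
    obtain ⟨T₁, hT₁, T₂, hT₂, hTne, hTeq⟩ :=
      Finset.exists_ne_map_eq_of_card_lt_of_maps_to
        (by rw [Finset.card_range, Finset.card_powerset, hxcard]; exact hcon) hmaps
    have hT₁' : T₁ ⊆ S := Finset.mem_powerset.mp hT₁
    have hT₂' : T₂ ⊆ S := Finset.mem_powerset.mp hT₂
    -- recover equality of integer remainders
    have hmod : (∑ i ∈ T₁, a i) % a m = (∑ i ∈ T₂, a i) % a m := by
      have d1 : g ∣ ((∑ i ∈ T₁, a i) % a m).toNat :=
        Int.natCast_dvd_natCast.mp (by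
          rw [Int.toNat_of_nonneg (Int.emod_nonneg _ (ha m).ne')]
          rw [Int.emod_def]
          exact dvd_sub (Finset.dvd_sum fun i _ => hgz i) (Dvd.dvd.mul_right (hgz m) _))
      have d2 : g ∣ ((∑ i ∈ T₂, a i) % a m).toNat :=
        Int.natCast_dvd_natCast.mp (by
          rw [Int.toNat_of_nonneg (Int.emod_nonneg _ (ha m).ne')]
          rw [Int.emod_def]
          exact dvd_sub (Finset.dvd_sum fun i _ => hgz i) (Dvd.dvd.mul_right (hgz m) _))
      have hnat : ((∑ i ∈ T₁, a i) % a m).toNat = ((∑ i ∈ T₂, a i) % a m).toNat := by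
        obtain ⟨c₁, hc₁⟩ := d1
        obtain ⟨c₂, hc₂⟩ := d2
        rw [hc₁, hc₂] at hTeq ⊢
        rw [Nat.mul_div_cancel_left _ hgpos, Nat.mul_div_cancel_left _ hgpos] at hTeq
        rw [hTeq]
      rw [← Int.toNat_of_nonneg (Int.emod_nonneg (∑ i ∈ T₁, a i) (ha m).ne'),
        ← Int.toNat_of_nonneg (Int.emod_nonneg (∑ i ∈ T₂, a i) (ha m).ne'), hnat]
    have hdvdT : a m ∣ (∑ i ∈ T₁, a i) - (∑ i ∈ T₂, a i) :=
      Int.ModEq.dvd (hmod.symm : Int.ModEq (a m) (∑ i ∈ T₂, a i) (∑ i ∈ T₁, a i))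
    set U₁ : Finset (Fin n) := T₁ \ T₂ with hU₁def
    set U₂ : Finset (Fin n) := T₂ \ T₁ with hU₂def
    have hdiffeq : (∑ i ∈ U₁, a i) - (∑ i ∈ U₂, a i)
        = (∑ i ∈ T₁, a i) - (∑ i ∈ T₂, a i) := by
      have e1 := Finset.sum_inter_add_sum_sdiff T₁ T₂ a
      have e2 := Finset.sum_inter_add_sum_sdiff T₂ T₁ a
      rw [Finset.inter_comm] at e2
      rw [hU₁def, hU₂def]
      linarith
    have hdvdU : a m ∣ (∑ i ∈ U₁, a i) - (∑ i ∈ U₂, a i) := hdiffeq ▸ hdvdT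
    have hU₁S : U₁ ⊆ S := (Finset.sdiff_subset).trans hT₁'
    have hU₂S : U₂ ⊆ S := (Finset.sdiff_subset).trans hT₂'
    have hdisj : Disjoint U₁ U₂ := disjoint_sdiff_sdiff
    have hUne : U₁ ≠ ∅ ∨ U₂ ≠ ∅ := by
      by_contra h
      push_neg at h
      exact hTne (Finset.Subset.antisymm (Finset.sdiff_eq_empty_iff_subset.mp h.1)
        (Finset.sdiff_eq_empty_iff_subset.mp h.2))
    have hposU : ∀ U : Finset (Fin n), U.Nonempty → 0 < ∑ i ∈ U, a i :=
      fun U hU => Finset.sum_pos (fun i _ => ha i) hU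
    have hnnU : ∀ U : Finset (Fin n), 0 ≤ ∑ i ∈ U, a i :=
      fun U => Finset.sum_nonneg (fun i _ => (ha i).le)
    rcases le_total (∑ i ∈ U₂, a i) (∑ i ∈ U₁, a i) with hle | hle
    · have hne : U₁.Nonempty := by
        rw [Finset.nonempty_iff_ne_empty]
        intro h
        rw [h, Finset.sum_empty] at hle
        have : ¬ U₂.Nonempty := fun hU => absurd (hposU U₂ hU) (not_lt.mpr (by linarith [hnnU U₂]))
        rcases hUne with h1 | h2
        · exact h1 h
        · exact h2 (Finset.not_nonempty_iff_eq_empty.mp this)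
      exact step U₁ U₂ hU₁S hU₂S hdisj hne hle hdvdU
    · have hne : U₂.Nonempty := by
        rw [Finset.nonempty_iff_ne_empty]
        intro h
        rw [h, Finset.sum_empty] at hle
        have : ¬ U₁.Nonempty := fun hU => absurd (hposU U₁ hU) (not_lt.mpr (by linarith [hnnU U₁]))
        rcases hUne with h1 | h2
        · exact h1 (Finset.not_nonempty_iff_eq_empty.mp this)
        · exact h2 h
      exact step U₂ U₁ hU₂S hU₁S hdisj.symm hne hle
        (by rw [← dvd_neg, neg_sub]; exact hdvdU)
  -- conclude
  have hAg : A / g ≠ 0 := by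
    have : 1 ≤ A / g := (Nat.one_le_div_iff hgpos).mpr (Nat.le_of_dvd haA hgA)
    omega
  have hk0log : k0 ≤ Nat.log 2 (A / g) := (Nat.le_log_iff_pow_le one_lt_two hAg).mpr hpow
  refine ⟨x, hxsol.1, hxsol.2, ?_⟩
  have hcard : (Finset.univ.filter fun j => x j ≠ 0).card ≤ k0 + 1 := by
    have hsub : (Finset.univ.filter fun j => x j ≠ 0) ⊆ insert m S :=
      Finset.subset_insert_iff.mpr (le_refl _)
    calc (Finset.univ.filter fun j => x j ≠ 0).card
        ≤ (insert m S).card := Finset.card_le_card hsub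
      _ ≤ S.card + 1 := Finset.card_insert_le _ _
      _ = k0 + 1 := by rw [hxcard]
  omega
end

section
/- Let a = (a₁,…,a_n) ∈ ℤ^n_{>0} with gcd(a₁,…,a_n) = 1, and b ∈ ℤ_{≥0}. Among all solutions x ∈ ℤ^n_{≥0} of a·x = b (assuming one exists), consider one minimizing the number of nonzero entries among coordinates 2,…,n. If x₂,…,x_t > 0 and x_{t+1} = ⋯ = x_n = 0, then t ≤ 1 + log₂(a₁). -/
/-- Key counting step for positive knapsacks: let `a ∈ ℤ^n_{>0}` with `gcd(a) = 1` and
`b ≥ 0`. If `x` is a non-negative solution of `a · x = b` minimizing the number of nonzero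
entries among the coordinates after the first, and the coordinates `2, …, t` of `x` are
positive while coordinates `t+1, …, n` vanish, then `t ≤ 1 + log₂ a₁`.
(Coordinates are `0`-indexed: index `0` is the first coordinate.) -/
theorem minimal_support_bound {n : ℕ} (hn : 0 < n) (a : Fin n → ℤ)
    (ha : ∀ i, 0 < a i) (hgcd : (Finset.univ.gcd fun i => (a i).natAbs) = 1)
    (b : ℤ) (hb : 0 ≤ b)
    (x : Fin n → ℤ) (hx0 : ∀ i, 0 ≤ x i) (hxb : ∑ i, a i * x i = b)
    (hmin : ∀ x' : Fin n → ℤ, (∀ i, 0 ≤ x' i) → ∑ i, a i * x' i = b →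
      (Finset.univ.filter fun i : Fin n => 1 ≤ i.val ∧ x i ≠ 0).card ≤
        (Finset.univ.filter fun i : Fin n => 1 ≤ i.val ∧ x' i ≠ 0).card)
    (t : ℕ) (ht1 : 1 ≤ t) (htn : t ≤ n)
    (hpos : ∀ i : Fin n, 1 ≤ i.val → i.val < t → 0 < x i)
    (hzero : ∀ i : Fin n, t ≤ i.val → x i = 0) :
    (t : ℝ) ≤ 1 + Real.logb 2 (a ⟨0, hn⟩) := by
  classical
  set i0 : Fin n := ⟨0, hn⟩ with hi0def
  by_contra hcon
  push_neg at hcon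
  have ha0 : 0 < a i0 := ha i0
  -- step: a i0 < 2 ^ (t-1)
  have hltR : (a i0 : ℝ) < 2 ^ ((t : ℝ) - 1) := by
    have h1 : Real.logb 2 (a i0) < (t : ℝ) - 1 := by linarith
    exact (Real.logb_lt_iff_lt_rpow (by norm_num) (by exact_mod_cast ha0)).mp h1
  have hltN : (a i0).natAbs < 2 ^ (t - 1) := by
    have hcast : ((t : ℝ) - 1) = ((t - 1 : ℕ) : ℝ) := by
      have : (1:ℕ) ≤ t := ht1
      push_cast [Nat.cast_sub this]
      ring
    rw [hcast, Real.rpow_natCast] at hltR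
    have : (a i0 : ℝ) < ((2 ^ (t - 1) : ℕ) : ℝ) := by push_cast; exact hltR
    have h2 : a i0 < (2 ^ (t - 1) : ℕ) := by exact_mod_cast this
    omega
  -- the index set I
  have hIlt : ∀ m ∈ Finset.Ico 1 t, m < n := by
    intro m hm
    exact lt_of_lt_of_le (Finset.mem_Ico.mp hm).2 htn
  set I : Finset (Fin n) := (Finset.Ico 1 t).attachFin hIlt with hIdef
  have hImem : ∀ i : Fin n, i ∈ I ↔ 1 ≤ i.val ∧ i.val < t := by
    intro i
    simp [hIdef, Finset.mem_attachFin, Finset.mem_Ico]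
  have hcardI : I.card = t - 1 := by
    rw [hIdef, Finset.card_attachFin, Nat.card_Ico]
  -- pigeonhole
  set m : ℕ := (a i0).natAbs with hmdef
  haveI : NeZero m := ⟨Int.natAbs_ne_zero.mpr (ne_of_gt ha0)⟩
  have hcards : (Finset.univ : Finset (ZMod m)).card < I.powerset.card := by
    rw [Finset.card_powerset, hcardI, Finset.card_univ, ZMod.card]
    exact hltN
  obtain ⟨S, hS, T, hT, hSTne, hfeq⟩ :=
    Finset.exists_ne_map_eq_of_card_lt_of_maps_to hcards
      (f := fun S : Finset (Fin n) => ((∑ i ∈ S, a i : ℤ) : ZMod m))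
      (fun _ _ => Finset.mem_univ _)
  have hSsub : S ⊆ I := Finset.mem_powerset.mp hS
  have hTsub : T ⊆ I := Finset.mem_powerset.mp hT
  have hdvd0 : a i0 ∣ (∑ i ∈ S, a i) - (∑ i ∈ T, a i) := by
    have : (((∑ i ∈ S, a i) - (∑ i ∈ T, a i) : ℤ) : ZMod m) = 0 := by
      rw [Int.cast_sub, hfeq, sub_self]
    have := (ZMod.intCast_zmod_eq_zero_iff_dvd _ _).mp this
    rwa [hmdef, Int.natCast_natAbs, abs_of_pos ha0] at this
  -- pass to symmetric difference
  set S' : Finset (Fin n) := S \ T with hS'def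
  set T' : Finset (Fin n) := T \ S with hT'def
  have hdisj : Disjoint S' T' := disjoint_sdiff_sdiff
  have hS'ne : S' ≠ T' := by
    intro h
    apply hSTne
    have he : S' = ∅ := by
      have : Disjoint S' S' := by nth_rewrite 2 [h]; exact hdisj
      simpa using disjoint_self.mp this
    have he' : T' = ∅ := by rw [← h, he]
    have h1 : S ⊆ T := by
      rwa [← Finset.sdiff_eq_empty_iff_subset]
    have h2 : T ⊆ S := by
      rwa [← Finset.sdiff_eq_empty_iff_subset]
    exact Finset.Subset.antisymm h1 h2
  have hsumdiff : (∑ i ∈ S', a i) - (∑ i ∈ T', a i)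
      = (∑ i ∈ S, a i) - (∑ i ∈ T, a i) := by
    have e1 := Finset.sum_inter_add_sum_sdiff S T a
    have e2 := Finset.sum_inter_add_sum_sdiff T S a
    rw [Finset.inter_comm] at e2
    rw [hS'def, hT'def]
    linarith
  have hdvd : a i0 ∣ (∑ i ∈ S', a i) - (∑ i ∈ T', a i) := by rwa [hsumdiff]
  have hS'sub : S' ⊆ I := Finset.Subset.trans (Finset.sdiff_subset) hSsub
  have hT'sub : T' ⊆ I := Finset.Subset.trans (Finset.sdiff_subset) hTsub
  -- wlog order
  obtain ⟨P, Q, hPQdisj, hPQne, hPsub, hQsub, hPQdvd, hPQle⟩ :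
      ∃ P Q : Finset (Fin n), Disjoint P Q ∧ P ≠ Q ∧ P ⊆ I ∧ Q ⊆ I ∧
        (a i0 ∣ (∑ i ∈ P, a i) - (∑ i ∈ Q, a i)) ∧
        (∑ i ∈ Q, a i) ≤ (∑ i ∈ P, a i) := by
    rcases le_total (∑ i ∈ T', a i) (∑ i ∈ S', a i) with h | h
    · exact ⟨S', T', hdisj, hS'ne, hS'sub, hT'sub, hdvd, h⟩
    · refine ⟨T', S', hdisj.symm, (Ne.symm hS'ne), hT'sub, hS'sub, ?_, h⟩
      have := hdvd.neg_right
      simpa using (dvd_neg.mpr hdvd)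
  -- P nonempty
  have hPne : P.Nonempty := by
    rcases Finset.eq_empty_or_nonempty P with h | h
    · exfalso
      rcases Finset.eq_empty_or_nonempty Q with h2 | h2
      · exact hPQne (h.trans h2.symm)
      · have hQpos : 0 < ∑ i ∈ Q, a i := Finset.sum_pos (fun i _ => ha i) h2
        rw [h, Finset.sum_empty] at hPQle
        linarith
    · exact h
  -- set up k
  set d : ℤ := (∑ i ∈ P, a i) - (∑ i ∈ Q, a i) with hddef
  have hd0 : 0 ≤ d := by rw [hddef]; linarith
  set k : ℤ := d / a i0 with hkdef
  have hk : a i0 * k = d := Int.mul_ediv_cancel' hPQdvd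
  have hk0 : 0 ≤ k := Int.ediv_nonneg hd0 (le_of_lt ha0)
  -- minimal element of P
  obtain ⟨j, hjP, hjmin⟩ := Finset.exists_min_image P x hPne
  have hjI := (hImem j).mp (hPsub hjP)
  have hxj : 0 < x j := hpos j hjI.1 hjI.2
  -- auxiliary facts
  have hi0P : i0 ∉ P := by
    intro h
    have := ((hImem i0).mp (hPsub h)).1
    simp [hi0def] at this
  have hi0Q : i0 ∉ Q := by
    intro h
    have := ((hImem i0).mp (hQsub h)).1
    simp [hi0def] at this
  -- the new solution
  set x' : Fin n → ℤ := fun i =>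
    x i + (if i ∈ P then -x j else 0) + (if i ∈ Q then x j else 0)
      + (if i = i0 then x j * k else 0) with hx'def
  have hx'0 : ∀ i, 0 ≤ x' i := by
    intro i
    rw [hx'def]
    by_cases hiP : i ∈ P
    · have h1 : i ∉ Q := Finset.disjoint_left.mp hPQdisj hiP
      have h2 : i ≠ i0 := by intro h; rw [h] at hiP; exact hi0P hiP
      simp only [if_pos hiP, if_neg h1, if_neg h2]
      have := hjmin i hiP
      linarith
    · by_cases hiQ : i ∈ Q
      · have h2 : i ≠ i0 := by intro h; rw [h] at hiQ; exact hi0Q hiQ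
        simp only [if_neg hiP, if_pos hiQ, if_neg h2]
        have := hx0 i
        linarith
      · by_cases hi0 : i = i0
        · simp only [if_neg hiP, if_neg hiQ, if_pos hi0]
          have h1 := hx0 i
          have h2 : 0 ≤ x j * k := mul_nonneg (le_of_lt hxj) hk0
          linarith
        · simp only [if_neg hiP, if_neg hiQ, if_neg hi0]
          have := hx0 i
          linarith
  have hsum' : ∑ i, a i * x' i = b := by
    have key : ∀ (U : Finset (Fin n)) (c : ℤ),
        (∑ i, a i * (if i ∈ U then c else 0)) = (∑ i ∈ U, a i) * c := by
      intro U c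
      simp only [mul_ite, mul_zero]
      rw [Finset.sum_ite_mem, Finset.univ_inter, Finset.sum_mul]
    have key0 : (∑ i, a i * (if i = i0 then x j * k else 0)) = a i0 * (x j * k) := by
      simp only [mul_ite, mul_zero]
      rw [Finset.sum_ite_eq' Finset.univ i0 (fun i => a i * (x j * k))]
      simp
    calc ∑ i, a i * x' i
        = (∑ i, a i * x i) + (∑ i, a i * (if i ∈ P then -x j else 0))
          + (∑ i, a i * (if i ∈ Q then x j else 0))
          + (∑ i, a i * (if i = i0 then x j * k else 0)) := by
          simp only [hx'def, mul_add]
          rw [Finset.sum_add_distrib, Finset.sum_add_distrib, Finset.sum_add_distrib]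
      _ = b + (∑ i ∈ P, a i) * (-x j) + (∑ i ∈ Q, a i) * (x j) + a i0 * (x j * k) := by
          rw [hxb, key, key, key0]
      _ = b := by
          have hk' : a i0 * k = (∑ i ∈ P, a i) - (∑ i ∈ Q, a i) := by rw [hk, hddef]
          linear_combination x j * hk'
  -- support strictly decreases
  have hsubset : (Finset.univ.filter fun i : Fin n => 1 ≤ i.val ∧ x' i ≠ 0)
      ⊆ (Finset.univ.filter fun i : Fin n => 1 ≤ i.val ∧ x i ≠ 0) := by
    intro i hi
    simp only [Finset.mem_filter, Finset.mem_univ, true_and] at hi ⊢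
    refine ⟨hi.1, ?_⟩
    by_cases hiP : i ∈ P
    · have hiI := (hImem i).mp (hPsub hiP)
      exact ne_of_gt (hpos i hiI.1 hiI.2)
    · by_cases hiQ : i ∈ Q
      · have hiI := (hImem i).mp (hQsub hiQ)
        exact ne_of_gt (hpos i hiI.1 hiI.2)
      · have hi0 : i ≠ i0 := by
          intro h
          have := hi.1
          rw [h] at this
          simp [hi0def] at this
        have : x' i = x i := by
          rw [hx'def]
          simp [hiP, hiQ, hi0]
        rw [← this]
        exact hi.2
  have hx'j : x' j = 0 := by
    have h1 : j ∉ Q := Finset.disjoint_left.mp hPQdisj hjP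
    have h2 : j ≠ i0 := by intro h; rw [h] at hjP; exact hi0P hjP
    rw [hx'def]
    simp [hjP, h1, h2]
  have hjin : j ∈ (Finset.univ.filter fun i : Fin n => 1 ≤ i.val ∧ x i ≠ 0) := by
    simp only [Finset.mem_filter, Finset.mem_univ, true_and]
    exact ⟨hjI.1, ne_of_gt hxj⟩
  have hjout : j ∉ (Finset.univ.filter fun i : Fin n => 1 ≤ i.val ∧ x' i ≠ 0) := by
    simp [hx'j]
  have hss : (Finset.univ.filter fun i : Fin n => 1 ≤ i.val ∧ x' i ≠ 0)
      ⊂ (Finset.univ.filter fun i : Fin n => 1 ≤ i.val ∧ x i ≠ 0) :=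
    (Finset.ssubset_iff_of_subset hsubset).mpr ⟨j, hjin, hjout⟩
  have := hmin x' hx'0 hsum'
  have := Finset.card_lt_card hss
  omega
end

section
/- For every Δ ∈ ℤ_{≥2} and m ≥ 1, there exists a diagonal matrix B ∈ ℤ^{m×m} with positive diagonal entries and det(B) = Δ such that the number κ(ℤ^m / ℒ(B)) of primary cyclic summands of ℤ^m / ℒ(B) equals Ω_m(Δ). -/
/-- Exponent of the `i`th diagonal entry: distribute `e` into `min e m` positive parts. -/
def aexp (m e i : ℕ) : ℕ :=
  (if i = 0 then e - min e m else 0) + (if i < min e m then 1 else 0)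

lemma aexp_sum {m e : ℕ} (hm : 1 ≤ m) (he : 1 ≤ e) :
    ∑ i ∈ Finset.range m, aexp m e i = e := by
  have ht : min e m ≤ e := min_le_left _ _
  have htm : min e m ≤ m := min_le_right _ _
  unfold aexp
  rw [Finset.sum_add_distrib]
  have h1 : ∑ i ∈ Finset.range m, (if i = 0 then e - min e m else 0) = e - min e m := by
    rw [Finset.sum_ite_eq' (Finset.range m) 0 (fun _ => e - min e m)]
    rw [if_pos (Finset.mem_range.2 hm)]
  have hf : Finset.filter (fun i => i < min e m) (Finset.range m) = Finset.range (min e m) := by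
    ext i
    simp only [Finset.mem_filter, Finset.mem_range]
    constructor
    · rintro ⟨_, h⟩; exact h
    · intro h; exact ⟨lt_of_lt_of_le h htm, h⟩
  have h2 : ∑ i ∈ Finset.range m, (if i < min e m then 1 else 0) = min e m := by
    rw [Finset.sum_ite, Finset.sum_const, Finset.sum_const_zero, add_zero, smul_eq_mul,
      mul_one, hf, Finset.card_range]
  rw [h1, h2]
  omega

lemma aexp_ne_zero_iff {m e : ℕ} (hm : 1 ≤ m) (he : 1 ≤ e) {i : ℕ} :
    aexp m e i ≠ 0 ↔ i < min e m := by
  have h0 : 0 < min e m := lt_min he hm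
  unfold aexp
  constructor
  · intro h
    by_contra hi
    have hi0 : i ≠ 0 := by omega
    simp [hi0, hi] at h
  · intro h
    simp [h]

lemma card_fin_subtype_lt (m t : ℕ) (ht : t ≤ m) :
    Fintype.card {i : Fin m // (i : ℕ) < t} = t := by
  have e : {i : Fin m // (i : ℕ) < t} ≃ Fin t :=
    { toFun := fun x => ⟨x.1.1, x.2⟩
      invFun := fun j => ⟨⟨j.1, lt_of_lt_of_le j.2 ht⟩, j.2⟩
      left_inv := fun x => rfl
      right_inv := fun j => rfl }
  rw [Fintype.card_congr e, Fintype.card_fin]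

/-- Span of the columns of a diagonal matrix is the product of the generated ideals. -/
lemma span_diagonal_eq_pi {m : ℕ} (v : Fin m → ℤ) :
    Submodule.span ℤ (Set.range fun j => (Matrix.diagonal v).transpose j)
      = Submodule.pi Set.univ (fun j => Ideal.span {v j}) := by
  apply le_antisymm
  · rw [Submodule.span_le]
    rintro _ ⟨j, rfl⟩
    intro i _
    simp only [Matrix.transpose_apply, Matrix.diagonal]
    by_cases hij : i = j
    · simpa [hij] using Ideal.mem_span_singleton_self (v i)
    · simp only [Matrix.of_apply, hij, if_neg]
      simpa [hij] using (Ideal.span {v i}).zero_mem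
  · intro x hx
    have hxs : x = ∑ j, Pi.single j (x j) := (Finset.univ_sum_single x).symm
    rw [hxs]
    apply Submodule.sum_mem
    intro j _
    obtain ⟨c, hc⟩ := Ideal.mem_span_singleton'.1 (hx j trivial)
    have hsingle : Pi.single j (x j) = c • fun i => (Matrix.diagonal v).transpose j i := by
      funext i
      by_cases hij : i = j
      · subst hij
        simp [Matrix.diagonal, ← hc]
      · simp [Matrix.diagonal, hij, Pi.single_eq_of_ne hij]
    rw [hsingle]
    exact Submodule.smul_mem _ c (Submodule.subset_span ⟨j, rfl⟩)

/-- Dropping trivial (subsingleton) factors from a dependent product of add. groups. -/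
noncomputable def dropTrivialAddEquiv {ι : Type*} (F : ι → Type*) [∀ i, AddGroup (F i)]
    (C : ι → Prop) (h0 : ∀ i, ¬ C i → Subsingleton (F i)) :
    ((i : ι) → F i) ≃+ ((s : {i // C i}) → F s.1) := by
  classical
  exact
  { toFun := fun x s => x s.1
    invFun := fun y i => if h : C i then y ⟨i, h⟩ else 0
    left_inv := fun x => by
      funext i
      by_cases h : C i
      · simp [h]
      · haveI := h0 i h
        exact Subsingleton.elim _ _
    right_inv := fun y => by
      funext s
      simp [s.2]
    map_add' := fun x y => rfl }

/-- Optimality of the sparsification bound: for every `Δ ≥ 2` and `m ≥ 1` there is a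
diagonal matrix `B ∈ ℤ^{m×m}` with positive diagonal and `det B = Δ` such that the primary
decomposition of `ℤ^m / ℒ(B)` has exactly `Ω_m(Δ)` (nontrivial prime-power cyclic)
summands. -/
theorem exists_diagonal_with_kappa_eq_truncatedOmega (Δ m : ℕ) (hΔ : 2 ≤ Δ) (hm : 1 ≤ m) :
    ∃ d : Fin m → ℕ, (∀ i, 0 < d i) ∧ (∏ i, d i = Δ) ∧
      ∃ (k : ℕ) (q : Fin k → ℕ), k = truncatedOmega m Δ ∧ (∀ i, IsPrimePow (q i)) ∧
        Nonempty
          (((Fin m → ℤ) ⧸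
              Submodule.span ℤ
                (Set.range fun j => (Matrix.diagonal fun i => (d i : ℤ)).transpose j)) ≃+
            ((i : Fin k) → ZMod (q i))) := by
  classical
  have hΔ0 : Δ ≠ 0 := by omega
  set P := Δ.primeFactors with hP
  have hprime : ∀ p : ↥P, Nat.Prime (p : ℕ) := fun p => Nat.prime_of_mem_primeFactors p.2
  have hepos : ∀ p : ↥P, 1 ≤ Δ.factorization (p : ℕ) := fun p =>
    Nat.Prime.factorization_pos_of_dvd (hprime p) hΔ0 (Nat.dvd_of_mem_primeFactors p.2)
  -- the diagonal entries
  set a : ↥P → Fin m → ℕ := fun p i => (p : ℕ) ^ aexp m (Δ.factorization (p : ℕ)) i.1 with ha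
  set d : Fin m → ℕ := fun i => ∏ p : ↥P, a p i with hd
  refine ⟨d, ?_, ?_, ?_⟩
  · -- positivity
    intro i
    apply Finset.prod_pos
    intro p _
    exact pow_pos (hprime p).pos _
  · -- product equals Δ
    have : ∏ i, d i = ∏ p : ↥P, ∏ i : Fin m, a p i := Finset.prod_comm
    rw [this]
    have hap : ∀ p : ↥P, ∏ i : Fin m, a p i = (p : ℕ) ^ Δ.factorization (p : ℕ) := by
      intro p
      rw [ha]
      rw [Finset.prod_pow_eq_pow_sum]
      congr 1
      rw [Fin.sum_univ_eq_sum_range]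
      exact aexp_sum hm (hepos p)
    rw [Finset.prod_congr rfl (fun p _ => hap p)]
    exact (Finset.prod_coe_sort P (fun p => p ^ Δ.factorization p)).trans
      (Nat.factorization_prod_pow_eq_self hΔ0)
  · -- the isomorphism
    set C : ↥P × Fin m → Prop := fun x => aexp m (Δ.factorization (x.1 : ℕ)) x.2.1 ≠ 0 with hC
    set S := {x : ↥P × Fin m // C x} with hS
    -- cardinality
    have hcard : Fintype.card S = truncatedOmega m Δ := by
      have e1 : S ≃ Σ p : ↥P, {i : Fin m // C (p, i)} :=
        Equiv.subtypeProdEquivSigmaSubtype (fun p i => C (p, i))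
      rw [Fintype.card_congr e1, Fintype.card_sigma]
      have : ∀ p : ↥P, Fintype.card {i : Fin m // C (p, i)}
          = min (Δ.factorization (p : ℕ)) m := by
        intro p
        have hiff : ∀ i : Fin m, C (p, i) ↔ (i : ℕ) < min (Δ.factorization (p : ℕ)) m :=
          fun i => aexp_ne_zero_iff hm (hepos p)
        rw [Fintype.card_congr (Equiv.subtypeEquivRight hiff)]
        exact card_fin_subtype_lt m _ (min_le_right _ _)
      rw [Finset.sum_congr rfl (fun p _ => this p)]
      exact Finset.sum_coe_sort P (fun p => min (Δ.factorization p) m)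
    set k := truncatedOmega m Δ with hk
    have eS : S ≃ Fin k := Fintype.equivFinOfCardEq hcard
    set qnat : S → ℕ := fun s => a s.1.1 s.1.2 with hqnat
    refine ⟨k, fun j => qnat (eS.symm j), rfl, ?_, ?_⟩
    · -- prime powers
      intro j
      set s := eS.symm j
      exact ⟨(s.1.1 : ℕ), aexp m (Δ.factorization (s.1.1 : ℕ)) s.1.2.1,
        (hprime s.1.1).prime, Nat.pos_of_ne_zero s.2, rfl⟩
    · -- build the AddEquiv chain
      refine ⟨?_⟩
      have coprimea : ∀ i : Fin m, Pairwise (Function.onFun Nat.Coprime fun p : ↥P => a p i) := by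
        intro i p1 p2 hne
        have hne' : (p1 : ℕ) ≠ (p2 : ℕ) := fun h => hne (Subtype.coe_injective h)
        exact Nat.Coprime.pow _ _ ((Nat.coprime_primes (hprime p1) (hprime p2)).2 hne')
      -- step 1: quotient to product of ZMod (d i)
      have e1 : ((Fin m → ℤ) ⧸
          Submodule.span ℤ
            (Set.range fun j => (Matrix.diagonal fun i => (d i : ℤ)).transpose j)) ≃+
          ((i : Fin m) → ZMod (d i)) :=
        (((Submodule.quotEquivOfEq _ _
            (span_diagonal_eq_pi (fun i => (d i : ℤ)))).trans
            (Submodule.quotientPi _)).toAddEquiv).trans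
          (AddEquiv.piCongrRight fun i => (Int.quotientSpanNatEquivZMod (d i)).toAddEquiv)
      -- step 2: CRT on each factor
      have e2 : ((i : Fin m) → ZMod (d i)) ≃+
          ((i : Fin m) → (p : ↥P) → ZMod (a p i)) :=
        AddEquiv.piCongrRight fun i => (ZMod.prodEquivPi _ (coprimea i)).toAddEquiv
      -- step 3: uncurry
      have e3 : ((i : Fin m) → (p : ↥P) → ZMod (a p i)) ≃+
          ((x : ↥P × Fin m) → ZMod (a x.1 x.2)) :=
        { toFun := fun f x => f x.2 x.1
          invFun := fun g i p => g (p, i)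
          left_inv := fun f => rfl
          right_inv := fun g => rfl
          map_add' := fun f g => rfl }
      -- step 4: drop trivial factors
      have hsub : ∀ x : ↥P × Fin m, ¬ C x → Subsingleton (ZMod (a x.1 x.2)) := by
        intro x hx
        rw [ZMod.subsingleton_iff]
        have : aexp m (Δ.factorization (x.1 : ℕ)) x.2.1 = 0 := by
          by_contra h; exact hx h
        rw [ha]
        simp [this]
      have e4 : ((x : ↥P × Fin m) → ZMod (a x.1 x.2)) ≃+
          ((s : S) → ZMod (qnat s)) :=
        dropTrivialAddEquiv (fun x => ZMod (a x.1 x.2)) C hsub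
      -- step 5: reindex
      have e5 : ((s : S) → ZMod (qnat s)) ≃+
          ((j : Fin k) → ZMod (qnat (eS.symm j))) :=
        (RingEquiv.piCongrLeft' (fun s : S => ZMod (qnat s)) eS).toAddEquiv
      exact e1.trans (e2.trans (e3.trans (e4.trans e5)))
end
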